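/- arXiv:2502.05840 — 6 statements merged into one kernel-verified Lean document; each statement's English description precedes it below -/
import Mathlib

section
/- Every function λ labelling the finite prefixes (of even length indexed by levels) of tuples in κ^(d_odd) by a countable label set L admits an everywhere-cofinal subtree T ⊆ κ^(d_odd) on which λ is constant per level, where κ = 2^(ℵ₀). Formally: let d be even, let d_odd = {1,3,...,d-1}, and let Nodes be the set of all tuples of ordinals < κ indexed by an initial segment {1,3,...,x-1} of d_odd for even x ≤ d. Given λ : Nodes → L with L countable, there exists T ⊆ κ^(d_odd) such that (1) for every node s of T (a prefix of some element of T), the set {t : s⌣t ∈ T} is cofinal in κ^({x+1,...,d-1}_odd) ordered lexicographically, and (2) for every even x ≤ d, λ takes a single value on all length-x prefixes of elements of T. -/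
/-- Ordinals below `κ = 2^ℵ₀` (the entries of signature tuples). -/
def OrdBelowContinuum : Type 1 :=
  {o : Ordinal // o < Cardinal.continuum.ord}

noncomputable instance : LinearOrder OrdBelowContinuum :=
  inferInstanceAs (LinearOrder {o : Ordinal // o < Cardinal.continuum.ord})

/-- `u ≤ t` lexicographically, comparing only the coordinates with index `≥ x`
(smaller index more significant). -/
def SuffLE {e : ℕ} (x : ℕ) (u t : Fin e → OrdBelowContinuum) : Prop :=
  (∀ i : Fin e, x ≤ (i : ℕ) → u i = t i) ∨
    ∃ i : Fin e, x ≤ (i : ℕ) ∧ u i < t i ∧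
      ∀ j : Fin e, x ≤ (j : ℕ) → (j : ℕ) < (i : ℕ) → u j = t j

namespace Stmt4Aux

local notation "O" => OrdBelowContinuum

/-- Unbounded (cofinal) set of ordinals below the continuum. -/
def Unb (S : Set OrdBelowContinuum) : Prop := ∀ a : OrdBelowContinuum, ∃ b ∈ S, a < b

lemma aleph0_lt_cof : Cardinal.aleph0 < (Cardinal.continuum.ord).cof := by
  have := Cardinal.lt_cof_power (le_refl (Cardinal.aleph0)) (by norm_num : (1:Cardinal) < 2)
  rwa [Cardinal.two_power_aleph0] at this

lemma exists_gt (a : O) : ∃ b : O, a < b := by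
  refine ⟨⟨Order.succ a.1, ?_⟩, ?_⟩
  · exact (Cardinal.isSuccLimit_ord Cardinal.aleph0_le_continuum).succ_lt a.2
  · exact Order.lt_succ a.1

lemma unb_univ : Unb (Set.univ) := fun a => by
  obtain ⟨b, hb⟩ := exists_gt a; exact ⟨b, trivial, hb⟩

/-- Pigeonhole: a countably-labelled unbounded set has an unbounded fiber. -/
lemma unb_fiber {V : Type} [Countable V] (f : O → V) {S : Set O} (hS : Unb S) :
    ∃ v : V, Unb {a | a ∈ S ∧ f a = v} := by
  by_contra hcon
  push_neg at hcon
  have H : ∀ v : V, ∃ a : O, ∀ b : O, b ∈ S → f b = v → b ≤ a := by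
    intro v
    have hv := hcon v
    unfold Unb at hv
    push_neg at hv
    obtain ⟨a, ha⟩ := hv
    exact ⟨a, fun b hb1 hb2 => ha b ⟨hb1, hb2⟩⟩
  choose g hg using H
  set c : Ordinal := ⨆ v : V, (g v).1 with hc
  have hclt : c < Cardinal.continuum.ord := by
    apply Ordinal.iSup_lt_ord _ (fun v => (g v).2)
    exact lt_of_le_of_lt Cardinal.mk_le_aleph0 aleph0_lt_cof
  obtain ⟨b, hbS, hb⟩ := hS ⟨c, hclt⟩
  have hble : b ≤ g (f b) := by
    exact hg (f b) b hbS rfl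
  have : (g (f b)).1 ≤ c := le_ciSup (Ordinal.bddAbove_range _) (f b)
  have : b.1 ≤ c := le_trans hble this
  exact absurd hb (not_lt.mpr this)

variable {L : Type} [Countable L]

/-- A prefix `s` of length `x` is good (w.r.t. level labels `ℓ`) if its label is
`ℓ x` and unboundedly many one-step extensions are good. -/
def Good (e : ℕ) (lab' : (x : ℕ) → (Fin x → O) → L) (ℓ : ℕ → L) :
    (x : ℕ) → (Fin x → O) → Prop := fun x s =>
  lab' x s = ℓ x ∧ ∀ _ : x < e, Unb {α | Good e lab' ℓ (x + 1) (Fin.snoc s α)}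
  termination_by x => e - x
  decreasing_by omega

lemma good_congr (e : ℕ) (lab' : (x : ℕ) → (Fin x → O) → L) {ℓ ℓ' : ℕ → L} :
    ∀ n x, x ≤ e → e - x ≤ n → ∀ s : Fin x → O,
      (∀ y, x ≤ y → y ≤ e → ℓ y = ℓ' y) → Good e lab' ℓ x s → Good e lab' ℓ' x s := by
  intro n
  induction n with
  | zero =>
    intro x hxe hx s hagree hg
    rw [Good] at hg ⊢
    exact ⟨hg.1.trans (hagree x le_rfl hxe), fun h => absurd h (by omega)⟩
  | succ n ih =>
    intro x hxe hx s hagree hg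
    by_cases h : x < e
    · rw [Good] at hg ⊢
      refine ⟨hg.1.trans (hagree x le_rfl hxe), fun _ => ?_⟩
      intro a
      obtain ⟨b, hb, hab⟩ := hg.2 h a
      refine ⟨b, ?_, hab⟩
      exact ih (x + 1) (by omega) (by omega) _ (fun y hy hy' => hagree y (by omega) hy') hb
    · exact ih x hxe (by omega) s hagree hg

lemma exists_good (e : ℕ) (lab' : (x : ℕ) → (Fin x → O) → L) :
    ∀ n x, x ≤ e → e - x ≤ n → ∀ s : Fin x → O, ∃ ℓ : ℕ → L, Good e lab' ℓ x s := by
  intro n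
  induction n with
  | zero =>
    intro x hxe hx s
    exact ⟨fun _ => lab' x s, by rw [Good]; exact ⟨rfl, fun h => absurd h (by omega)⟩⟩
  | succ n ih =>
    intro x hxe hx s
    by_cases h : x < e
    · have H : ∀ α : O, ∃ ℓ : ℕ → L, Good e lab' ℓ (x + 1) (Fin.snoc s α) :=
        fun α => ih (x + 1) (by omega) (by omega) (Fin.snoc s α)
      choose F hF using H
      obtain ⟨v, hv⟩ := unb_fiber (fun α => (fun i : Fin (e + 1) => F α i)) unb_univ
      refine ⟨fun y => if y = x then lab' x s else if hy : y ≤ e then v ⟨y, by omega⟩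
        else lab' x s, ?_⟩
      rw [Good]
      refine ⟨by simp, fun _ => ?_⟩
      intro a
      obtain ⟨b, ⟨-, hbv⟩, hab⟩ := hv a
      refine ⟨b, ?_, hab⟩
      refine good_congr e lab' e (x + 1) (by omega) (by omega) _ ?_ (hF b)
      intro y hy hy'
      have : F b y = v ⟨y, by omega⟩ := by
        have := congrFun hbv ⟨y, by omega⟩
        simpa using this
      rw [this]
      simp only [if_neg (by omega : ¬ y = x), dif_pos hy']
    · exact ih x hxe (by omega) s

lemma snoc_lt {x : ℕ} (s : Fin x → O) (α : O) (j : Fin (x + 1)) (hj : (j : ℕ) < x) :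
    (Fin.snoc s α : Fin (x+1) → O) j = s ⟨j, hj⟩ := by
  simp only [Fin.snoc, hj, dif_pos]
  rfl

lemma snoc_last {x : ℕ} (s : Fin x → O) (α : O) (j : Fin (x + 1)) (hj : (j : ℕ) = x) :
    (Fin.snoc s α : Fin (x+1) → O) j = α := by
  simp [Fin.snoc, hj]

def labExt (e : ℕ) (lab : (x : Fin (e + 1)) → (Fin (x : ℕ) → O) → L) :
    (x : ℕ) → (Fin x → O) → L := fun x s =>
  if h : x < e + 1 then lab ⟨x, h⟩ s else lab ⟨0, Nat.succ_pos e⟩ (fun i => i.elim0)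

lemma labExt_eq (e : ℕ) (lab : (x : Fin (e + 1)) → (Fin (x : ℕ) → O) → L)
    (z : Fin (e + 1)) (f : Fin (z : ℕ) → O) : labExt e lab z.1 f = lab z f := by
  unfold labExt
  rw [dif_pos z.isLt]

lemma extend (e : ℕ) (lab' : (x : ℕ) → (Fin x → O) → L) (ℓ : ℕ → L) :
    ∀ n x, x ≤ e → e - x ≤ n → ∀ s : Fin x → O,
      (∀ y (hy : y ≤ x), Good e lab' ℓ y
        (fun i : Fin y => s ⟨i, lt_of_lt_of_le i.isLt hy⟩)) →
      ∃ t : Fin e → O,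
        (∀ z (hz : z ≤ e), Good e lab' ℓ z
          (fun i : Fin z => t ⟨i, lt_of_lt_of_le i.isLt hz⟩)) ∧
        (∀ (i : Fin e) (hi : (i : ℕ) < x), t i = s ⟨i, hi⟩) := by
  intro n
  induction n with
  | zero =>
    intro x hxe hx s hs
    have hex : x = e := by omega
    subst hex
    refine ⟨fun i => s ⟨i, i.isLt⟩, ?_, ?_⟩
    · intro z hz
      exact hs z hz
    · intro i hi
      rfl
  | succ n ih =>
    intro x hxe hx s hs
    by_cases h : x < e
    · have hgood : Good e lab' ℓ x s := hs x le_rfl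
      rw [Good] at hgood
      obtain ⟨b, hbA, -⟩ := hgood.2 h
        ⟨0, (Cardinal.isSuccLimit_ord Cardinal.aleph0_le_continuum).pos⟩
      have hpre : ∀ y (hy : y ≤ x + 1), Good e lab' ℓ y
          (fun i : Fin y => (Fin.snoc s b : Fin (x+1) → O) ⟨i, lt_of_lt_of_le i.isLt hy⟩) := by
        intro y hy
        by_cases hyx : y ≤ x
        · have heq : (fun i : Fin y =>
              (Fin.snoc s b : Fin (x+1) → O) ⟨i, lt_of_lt_of_le i.isLt hy⟩) =
              (fun i : Fin y => s ⟨i, lt_of_lt_of_le i.isLt hyx⟩) :=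
            funext fun i => snoc_lt s b _ (lt_of_lt_of_le i.isLt hyx)
          rw [heq]
          exact hs y hyx
        · have hy1 : y = x + 1 := by omega
          subst hy1
          exact hbA
      obtain ⟨t, htT, hti⟩ := ih (x + 1) (by omega) (by omega) (Fin.snoc s b) hpre
      refine ⟨t, htT, ?_⟩
      intro i hi
      rw [hti i (by omega), snoc_lt s b _ hi]
    · exact ih x hxe (by omega) s hs



end Stmt4Aux

open Stmt4Aux

/-- Extraction of an everywhere-cofinal subtree on which a countable inner
labelling is constant per level.  Tuples in `κ^(d_odd)` (with `d = 2e` even and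
`κ = 2^ℵ₀`) are encoded as functions `Fin e → OrdBelowContinuum`; a node at level
`x = 2·x'` is a prefix of length `x'`, encoded by a representative element of `T`
together with the cut `x'`. -/
theorem stmt4 (e : ℕ) (L : Type) [Countable L]
    (lab : (x : Fin (e + 1)) → (Fin (x : ℕ) → OrdBelowContinuum) → L) :
    ∃ T : Set (Fin e → OrdBelowContinuum),
      T.Nonempty ∧
      -- everywhere cofinal: for each node of `T` (a prefix of an element `s ∈ T`,
      -- of any length `x ≤ e`), the subtree rooted at it is cofinal among all
      -- tuples on the remaining coordinates
      (∀ s ∈ T, ∀ x : ℕ, x ≤ e → ∀ u : Fin e → OrdBelowContinuum,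
        ∃ t ∈ T, (∀ i : Fin e, (i : ℕ) < x → t i = s i) ∧ SuffLE x u t) ∧
      -- the labelling is constant per level on `T`
      (∀ x : Fin (e + 1), ∀ s ∈ T, ∀ t ∈ T,
        lab x (fun i => s ⟨(i : ℕ), by have h1 := i.isLt; have h2 := x.isLt; omega⟩) =
          lab x (fun i => t ⟨(i : ℕ), by have h1 := i.isLt; have h2 := x.isLt; omega⟩)) := by
  set lab' := labExt e lab with hlab'
  obtain ⟨ℓ, hℓ⟩ := exists_good e lab' e 0 (by omega) (by omega) (fun i => i.elim0)
  refine ⟨{t | ∀ z (hz : z ≤ e), Good e lab' ℓ z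
      (fun i : Fin z => t ⟨i, lt_of_lt_of_le i.isLt hz⟩)}, ?_, ?_, ?_⟩
  · obtain ⟨t, htT, -⟩ := extend e lab' ℓ e 0 (by omega) (by omega) (fun i => i.elim0)
      (by intro y hy
          obtain rfl : y = 0 := by omega
          exact hℓ)
    exact ⟨t, htT⟩
  · intro s hs x hx u
    by_cases h : x < e
    · have hgood : Good e lab' ℓ x (fun i : Fin x => s ⟨i, lt_of_lt_of_le i.isLt hx⟩) :=
        hs x hx
      rw [Good] at hgood
      obtain ⟨b, hbA, hub⟩ := hgood.2 h (u ⟨x, h⟩)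
      set p : Fin x → OrdBelowContinuum := fun i => s ⟨i, lt_of_lt_of_le i.isLt hx⟩ with hp
      have hpre : ∀ y (hy : y ≤ x + 1), Good e lab' ℓ y
          (fun i : Fin y => (Fin.snoc p b : Fin (x+1) → OrdBelowContinuum)
            ⟨i, lt_of_lt_of_le i.isLt hy⟩) := by
        intro y hy
        by_cases hyx : y ≤ x
        · have heq : (fun i : Fin y =>
              (Fin.snoc p b : Fin (x+1) → OrdBelowContinuum)
                ⟨i, lt_of_lt_of_le i.isLt hy⟩) =
              (fun i : Fin y => s ⟨i, lt_of_lt_of_le i.isLt (le_trans hyx hx)⟩) :=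
            funext fun i => snoc_lt p b _ (lt_of_lt_of_le i.isLt hyx)
          rw [heq]
          exact hs y (le_trans hyx hx)
        · obtain rfl : y = x + 1 := by omega
          exact hbA
      obtain ⟨t, htT, hti⟩ := extend e lab' ℓ e (x + 1) (by omega) (by omega)
        (Fin.snoc p b) hpre
      refine ⟨t, htT, ?_, Or.inr ⟨⟨x, h⟩, le_rfl, ?_, ?_⟩⟩
      · intro i hi
        rw [hti i (by omega), snoc_lt p b _ hi]
      · rw [hti ⟨x, h⟩ (by simp), snoc_last p b _ rfl]
        exact hub
      · intro j h1 h2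
        simp at h2
        omega
    · refine ⟨s, hs, fun i hi => rfl, Or.inl ?_⟩
      intro i hxi
      have := i.isLt
      omega
  · intro x s hs t ht
    have hxe : (x : ℕ) ≤ e := by have := x.isLt; omega
    have h1 := hs x.1 hxe
    have h2 := ht x.1 hxe
    rw [Good] at h1 h2
    have h1 := h1.1
    have h2 := h2.1
    rw [hlab', labExt_eq e lab x] at h1 h2
    exact h1.trans h2.symm
end

section
/- Let d be even and κ a cardinal. Define the graph S^κ_d whose vertices are tuples s of ordinals < κ indexed by odd priorities in {1,3,...,d-1}, with an edge s →^y s' (for y ∈ {0,...,d-1}) iff either y is even and s restricted to indices < y is ≥ s' restricted to indices < y (lexicographically), or y is odd and s restricted to indices ≤ y is > s' restricted to indices ≤ y (lexicographically). Then every vertex of S^κ_d satisfies the min-parity objective: every infinite path s_0 →^{y_0} s_1 →^{y_1} ... in S^κ_d has lim inf(y_i) even. -/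
open Filter

/-- Ordinals below `κ.ord`: the entries of vertices of `S^κ_d`. -/
def OrdBelow (κ : Cardinal) : Type 1 := {o : Ordinal // o < κ.ord}

noncomputable instance (κ : Cardinal) : LinearOrder (OrdBelow κ) :=
  inferInstanceAs (LinearOrder {o : Ordinal // o < κ.ord})

/-- `f = g` on the first `m` coordinates. -/
def EqBelow {κ : Cardinal} {e : ℕ} (m : ℕ) (f g : Fin e → OrdBelow κ) : Prop :=
  ∀ i : Fin e, (i : ℕ) < m → f i = g i

/-- `f < g` lexicographically, on the first `m` coordinates (smaller index more
significant). -/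
def LexLT {κ : Cardinal} {e : ℕ} (m : ℕ) (f g : Fin e → OrdBelow κ) : Prop :=
  ∃ i : Fin e, (i : ℕ) < m ∧ f i < g i ∧ ∀ j : Fin e, (j : ℕ) < (i : ℕ) → f j = g j

/-- The edge relation of `S^κ_d` (for `d = 2e`; vertices are tuples of ordinals
`< κ` indexed by the odd priorities `1,3,…,d−1`, coordinate `i` corresponding to
odd priority `2i+1`): `s →^y s'` iff `y` is even and `s' ≤ s` lexicographically on
the coordinates of index `< y` (i.e. the first `⌊y/2⌋` coordinates), or `y` is odd
and `s' < s` lexicographically on the coordinates of index `≤ y` (the first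
`(y+1)/2` coordinates). -/
def SEdge {κ : Cardinal} {e : ℕ} (y : ℕ) (s s' : Fin e → OrdBelow κ) : Prop :=
  if Even y then EqBelow (y / 2) s' s ∨ LexLT (y / 2) s' s
  else LexLT ((y + 1) / 2) s' s

section Aux

variable {κ : Cardinal} {e m : ℕ}

/-- Restriction of a vertex to its first `m` coordinates, as a lexicographic tuple. -/
noncomputable def restr (hme : m ≤ e) (a : Fin e → OrdBelow κ) : Lex (Fin m → Ordinal) :=
  toLex fun j => (a (Fin.castLE hme j)).1

theorem restr_lt_of_lexLT (hme : m ≤ e) {a b : Fin e → OrdBelow κ} (h : LexLT m a b) :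
    restr hme a < restr hme b := by
  obtain ⟨i0, him, hlt, heq⟩ := h
  refine ⟨⟨(i0 : ℕ), him⟩, fun j hj => ?_, ?_⟩
  · exact congrArg Subtype.val (heq (Fin.castLE hme j) hj)
  · have : Fin.castLE hme ⟨(i0 : ℕ), him⟩ = i0 := by ext; rfl
    simpa [restr, this] using (show (a i0).1 < (b i0).1 from hlt)

theorem restr_le_of_lexLT (hme : m ≤ e) {m' : ℕ} {a b : Fin e → OrdBelow κ}
    (h : LexLT m' a b) : restr hme a ≤ restr hme b := by
  obtain ⟨i0, him, hlt, heq⟩ := h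
  by_cases hc : (i0 : ℕ) < m
  · exact le_of_lt (restr_lt_of_lexLT hme ⟨i0, hc, hlt, heq⟩)
  · apply le_of_eq
    unfold restr
    congr 1
    funext j
    exact congrArg Subtype.val (heq (Fin.castLE hme j) (lt_of_lt_of_le j.2 (not_lt.mp hc)))

theorem restr_eq_of_eqBelow (hme : m ≤ e) {m' : ℕ} (hmm' : m ≤ m') {a b : Fin e → OrdBelow κ}
    (h : EqBelow m' a b) : restr hme a = restr hme b := by
  unfold restr
  congr 1
  funext j
  exact congrArg Subtype.val (h (Fin.castLE hme j) (lt_of_lt_of_le j.2 hmm'))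

end Aux

/-- Every vertex of `S^κ_d` satisfies the min-parity objective: along any infinite
path `s 0 →^{y 0} s 1 →^{y 1} ⋯` with priorities `< d`, the lim inf of the
priorities is even. -/
theorem stmt9 (κ : Cardinal) (e d : ℕ) (hd : d = 2 * e)
    (s : ℕ → Fin e → OrdBelow κ) (y : ℕ → ℕ) (hy : ∀ i, y i < d)
    (hedge : ∀ i, SEdge (y i) (s i) (s (i + 1))) :
    ∃ x, Even x ∧ (∃ᶠ i in atTop, y i = x) ∧ (∀ᶠ i in atTop, x ≤ y i) := by
  classical
  -- some value occurs frequently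
  have hfreq : ∃ v, ∃ᶠ i in atTop, y i = v := by
    by_contra h
    push_neg at h
    have h' : ∀ᶠ i in atTop, ∀ v ∈ Finset.range d, y i ≠ v := by
      rw [Filter.eventually_all_finset]
      intro v _
      exact h v
    obtain ⟨i, hi⟩ := h'.exists
    exact hi (y i) (Finset.mem_range.mpr (hy i)) rfl
  set x := Nat.find hfreq with hxdef
  have hx : ∃ᶠ i in atTop, y i = x := Nat.find_spec hfreq
  have hev : ∀ᶠ i in atTop, x ≤ y i := by
    have h' : ∀ᶠ i in atTop, ∀ v ∈ Finset.range x, y i ≠ v := by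
      rw [Filter.eventually_all_finset]
      intro v hv
      exact Filter.not_frequently.mp (Nat.find_min hfreq (Finset.mem_range.mp hv))
    filter_upwards [h'] with i hi
    by_contra hc
    exact hi (y i) (Finset.mem_range.mpr (not_le.mp hc)) rfl
  refine ⟨x, ?_, hx, hev⟩
  by_contra hodd
  obtain ⟨k, hk⟩ := Nat.not_even_iff_odd.mp hodd
  -- x = 2k+1; set m := k+1
  set m := k + 1 with hm
  have hxd : x < d := by
    obtain ⟨i, hi⟩ := hx.exists
    exact hi ▸ hy i
  have hme : m ≤ e := by omega
  set t : ℕ → Lex (Fin m → Ordinal) := fun i => restr hme (s i) with ht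
  -- step lemmas
  have hstep : ∀ i, x ≤ y i → t (i + 1) ≤ t i := by
    intro i hxi
    have he := hedge i
    unfold SEdge at he
    by_cases hpar : Even (y i)
    · rw [if_pos hpar] at he
      have hyx : x < y i := lt_of_le_of_ne hxi fun hxy => hodd (hxy ▸ hpar)
      have hmy : m ≤ y i / 2 := by omega
      rcases he with h | h
      · exact le_of_eq (restr_eq_of_eqBelow hme hmy h)
      · exact restr_le_of_lexLT hme h
    · rw [if_neg hpar] at he
      exact restr_le_of_lexLT hme he
  have hstrict : ∀ i, y i = x → t (i + 1) < t i := by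
    intro i hyx
    have he := hedge i
    unfold SEdge at he
    rw [hyx, if_neg hodd] at he
    have : (x + 1) / 2 = m := by omega
    rw [this] at he
    exact restr_lt_of_lexLT hme he
  obtain ⟨N, hN⟩ := Filter.eventually_atTop.mp hev
  set u : ℕ → Lex (Fin m → Ordinal) := fun n => t (N + n) with hu
  have hanti : Antitone u :=
    antitone_nat_of_succ_le fun n => hstep (N + n) (hN (N + n) (Nat.le_add_right N n))
  obtain ⟨a, ⟨n0, rfl⟩, hmin⟩ :=
    (IsWellFounded.wf (r := ((· < ·) : Lex (Fin m → Ordinal) → Lex (Fin m → Ordinal) → Prop))).has_min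
      (Set.range u) ⟨u 0, 0, rfl⟩
  have hconst : ∀ n, n0 ≤ n → u n = u n0 := fun n hn =>
    (hanti hn).lt_or_eq.resolve_left (hmin (u n) ⟨n, rfl⟩)
  obtain ⟨i, hiN, hix⟩ := Filter.frequently_atTop.mp hx (N + n0)
  have hi' : i = N + (i - N) := by omega
  have h1 : u (i - N + 1) < u (i - N) := by
    have := hstrict i hix
    simpa [hu, ← Nat.add_assoc, ← hi'] using this
  rw [hconst (i - N) (by omega), hconst (i - N + 1) (by omega)] at h1
  exact lt_irrefl _ h1
end

section
/- Let A be a parity automaton of index d and S a d-graph (directed graph with edges labelled by priorities in {0,...,d-1}) every vertex of which satisfies the min-parity objective Parity_d. Then the cascade product A ⋉ S, with vertices V(A) × V(S) and edges (q,s) →^c (q',s') iff there exists a priority y with q →^{c:y} q' in A and s →^y s' in S, satisfies L(A): every infinite path from (q₀,s₀) has a label whose projection to Σ belongs to L(A), and moreover A ⋉ S is well-founded (contains no infinite path whose label is eventually only ε). -/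
open Filter

/-- A (nondeterministic) parity automaton over the alphabet `Sig ∪ {ε}`
(`Option Sig`, with `none` playing the role of `ε`). -/
structure Aut (Sig Q : Type) where
  init : Q
  trans : Q → Option Sig → ℕ → Q → Prop

/-- `ρ` is a run of `A` (from its initial state) with labels `c` and priorities `p`. -/
def IsRun {Sig Q : Type} (A : Aut Sig Q) (c : ℕ → Option Sig) (p : ℕ → ℕ)
    (ρ : ℕ → Q) : Prop :=
  ρ 0 = A.init ∧ ∀ i, A.trans (ρ i) (c i) (p i) (ρ (i + 1))

/-- Min-parity acceptance: the lim inf of the priorities is even. -/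
def ParAccept (p : ℕ → ℕ) : Prop :=
  ∃ x, Even x ∧ (∃ᶠ i in atTop, p i = x) ∧ (∀ᶠ i in atTop, x ≤ p i)

/-- `w` is the projection to `Sig` of the word `c` over `Sig ∪ {ε}` (obtained by
removing all `ε`'s, and requiring infinitely many non-`ε` letters). -/
def IsProjection {Sig : Type} (c : ℕ → Option Sig) (w : ℕ → Sig) : Prop :=
  ∃ φ : ℕ → ℕ, StrictMono φ ∧ (∀ n, c (φ n) = some (w n)) ∧
    ∀ i, c i ≠ none → ∃ n, φ n = i

/-- The language of `A`: projections to `Sig` of the labels of accepting runs. -/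
def LangEps {Sig Q : Type} (A : Aut Sig Q) : Set (ℕ → Sig) :=
  {w | ∃ c p ρ, IsRun A c p ρ ∧ ParAccept p ∧ IsProjection c w}

/-- Cascade product: if `A` is a parity automaton of index `d` and `S` is a
`d`-graph all of whose vertices satisfy `Parity_d`, then `A ⋉ S` (with edges
`(q,s) →^c (q',s')` iff for some priority `y`, `q →^{c:y} q'` in `A` and
`s →^y s'` in `S`) is well-founded (no infinite path is eventually labelled only
by `ε`) and satisfies `L(A)`: the projection of the label of any infinite path
from `(q₀,s₀)` belongs to `L(A)`. -/
theorem stmt10 {Sig Q V : Type} (d : ℕ) (A : Aut Sig Q)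
    (hdA : ∀ q a y q', A.trans q a y q' → y < d)
    (E : V → ℕ → V → Prop)
    (hdS : ∀ s y s', E s y s' → y < d)
    (hS : ∀ (sv : ℕ → V) (pr : ℕ → ℕ),
      (∀ i, E (sv i) (pr i) (sv (i + 1))) → ParAccept pr)
    (hA : ∀ c p ρ, IsRun A c p ρ → ParAccept p → (∃ᶠ i in atTop, c i ≠ none))
    (s₀ : V) (π : ℕ → Q × V) (c : ℕ → Option Sig)
    (hinit : π 0 = (A.init, s₀))
    (hpath : ∀ i, ∃ y, A.trans (π i).1 (c i) y (π (i + 1)).1 ∧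
      E (π i).2 y (π (i + 1)).2) :
    (∃ᶠ i in atTop, c i ≠ none) ∧ ∃ w, IsProjection c w ∧ w ∈ LangEps A := by

  classical
  choose pr hA' hE using hpath
  have hrun : IsRun A c pr (fun i => (π i).1) :=
    ⟨by simp [hinit], hA'⟩
  have hacc : ParAccept pr := hS (fun i => (π i).2) pr hE
  have hfreq : ∃ᶠ i in atTop, c i ≠ none := hA c pr _ hrun hacc
  have hinf : {i | c i ≠ none}.Infinite := by
    rw [← Nat.frequently_atTop_iff_infinite]; exact hfreq
  set P : ℕ → Prop := fun i => c i ≠ none with hP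
  have hsome : ∀ n, (c (Nat.nth P n)).isSome := by
    intro n
    have := Nat.nth_mem_of_infinite hinf n
    exact Option.isSome_iff_ne_none.2 this
  refine ⟨hfreq, fun n => (c (Nat.nth P n)).get (hsome n), ?_, ?_⟩
  · refine ⟨Nat.nth P, Nat.nth_strictMono hinf, fun n => (Option.some_get (hsome n)).symm,
      fun i hi => ⟨Nat.count P i, Nat.nth_count hi⟩⟩
  · exact ⟨c, pr, _, hrun, hacc,
      ⟨Nat.nth P, Nat.nth_strictMono hinf, fun n => (Option.some_get (hsome n)).symm,
        fun i hi => ⟨Nat.count P i, Nat.nth_count hi⟩⟩⟩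
end

section
/- Define the automaton 𝒯 over input alphabet [d₁] × [d₂]* (pairs of priorities), with states the interleavings of the sequences ⟨1,3,...,d₁⟩ and ⟨1*,3*,...,d₂*⟩ of odd priorities, and transitions as follows: on input (y,z) from state τ, let i = min(ind_τ(y), ind_τ(z)) where ind_τ(p) is the position in τ of p if p is odd, of p−1 if p ≥ 2 is even, and 0 if p = 0; output priority 2i if the minimising priority is even and 2i−1 if odd; if odd and the minimum is achieved by y, the new state inserts the first element of the other family occurring after position i to the left of position i (symmetrically for z), otherwise the state is unchanged. Then 𝒯 recognises the language L = { w ∈ ([d₁]×[d₂]*)^ω : π₁(w) ∈ Parity_{d₁} or π₂(w) ∈ Parity_{d₂} }, where acceptance is min-parity on the output priorities. -/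
open Filter

/-- States of the automaton `𝒯`: lists over `[d₁]_odd ⊕ [d₂]*_odd` (left = first
family, right = starred family). -/
abbrev TS : Type := List (ℕ ⊕ ℕ)

/-- The list `[1, 3, …]` of odd numbers `≤ d`. -/
def oddList (d : ℕ) : List ℕ := (List.range ((d + 1) / 2)).map fun i => 2 * i + 1

/-- `τ` is a valid state of `𝒯`: an interleaving of `⟨1,3,…,d₁⟩` and
`⟨1*,3*,…,d₂*⟩`. -/
def IsTState (d₁ d₂ : ℕ) (τ : TS) : Prop :=
  τ.filterMap Sum.getLeft? = oddList d₁ ∧ τ.filterMap Sum.getRight? = oddList d₂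

/-- `ind_τ(p)`, 1-indexed position in `τ` of `p` (if `p` odd) or of `p − 1` (if
`p ≥ 2` even), and `0` if `p = 0`; `isLeft` chooses the family of `p`. -/
def ind (τ : TS) (isLeft : Bool) (p : ℕ) : ℕ :=
  if p = 0 then 0
  else
    (τ.idxOf (if isLeft then Sum.inl (if p % 2 = 1 then p else p - 1)
                else Sum.inr (if p % 2 = 1 then p else p - 1))) + 1

/-- Reconfiguration of the state upon an odd input priority at (1-indexed)
position `i`: the first element of the family `side` occurring at a position
`> i` is inserted on the left of position `i`. -/
def reconfig (τ : TS) (i : ℕ) (side : Bool) : TS :=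
  match (τ.drop i).findIdx? (fun s => s.isLeft == side) with
  | none => τ
  | some k =>
      τ.take (i - 1) ++ (τ.drop i).getD k (Sum.inl 0) :: ((τ.drop (i - 1)).eraseIdx (k + 1))

/-- The transition function of `𝒯` on input `(y, z)`: output priority and new
state.  With `i = min(ind_τ(y), ind_τ(z))`, the output is `2i` if the minimising
input priority is even (state unchanged) and `2i − 1` if it is odd (state
reconfigured by moving in the first later element of the other family). -/
def Tstep (τ : TS) (y z : ℕ) : ℕ × TS :=
  let iy := ind τ true y
  let iz := ind τ false z
  if iy ≤ iz then
    if y % 2 = 0 then (2 * iy, τ) else (2 * iy - 1, reconfig τ iy false)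
  else
    if z % 2 = 0 then (2 * iz, τ) else (2 * iz - 1, reconfig τ iz true)

/-- The sequence of states of `𝒯` along the input word `w`, starting from `τ₀`. -/
def Tstate (τ₀ : TS) (w : ℕ → ℕ × ℕ) : ℕ → TS
  | 0 => τ₀
  | n + 1 => (Tstep (Tstate τ₀ w n) (w n).1 (w n).2).2

/-- The sequence of output priorities of `𝒯` along the input word `w`. -/
def Tout (τ₀ : TS) (w : ℕ → ℕ × ℕ) (n : ℕ) : ℕ :=
  (Tstep (Tstate τ₀ w n) (w n).1 (w n).2).1

section AuxiliaryLemmas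
open List
attribute [local instance] Classical.propDecidable

/-- A bounded ℕ-sequence has a recurring value. -/
lemma exists_rec {p : ℕ → ℕ} {B : ℕ} (hB : ∀ n, p n ≤ B) :
    ∃ x, ∃ᶠ n in atTop, p n = x := by
  by_contra h
  push_neg at h
  have h' : ∀ x, ∀ᶠ n in atTop, p n ≠ x := by
    intro x
    have := h x
    exact this
  have : ∀ᶠ n in atTop, ∀ x ∈ Finset.range (B+1), p n ≠ x :=
    (Finset.range (B+1)).eventually_all.2 fun x _ => h' x
  rcases this.exists with ⟨n, hn⟩
  exact hn (p n) (Finset.mem_range.2 (Nat.lt_succ_of_le (hB n))) rfl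

noncomputable def minRec (p : ℕ → ℕ) (h : ∃ x, ∃ᶠ n in atTop, p n = x) : ℕ :=
  Nat.find h

lemma minRec_rec {p : ℕ → ℕ} (h : ∃ x, ∃ᶠ n in atTop, p n = x) :
    ∃ᶠ n in atTop, p n = minRec p h := Nat.find_spec h

lemma minRec_le {p : ℕ → ℕ} (h : ∃ x, ∃ᶠ n in atTop, p n = x) {x : ℕ}
    (hx : ∃ᶠ n in atTop, p n = x) : minRec p h ≤ x := Nat.find_le hx

lemma minRec_eventually {p : ℕ → ℕ} (h : ∃ x, ∃ᶠ n in atTop, p n = x) :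
    ∀ᶠ n in atTop, minRec p h ≤ p n := by
  have : ∀ x < minRec p h, ∀ᶠ n in atTop, p n ≠ x := by
    intro x hx
    have := Nat.find_min h hx
    rwa [Filter.not_frequently] at this
  have h2 : ∀ᶠ n in atTop, ∀ x ∈ Finset.range (minRec p h), p n ≠ x :=
    (Finset.range _).eventually_all.2 fun x hx => this x (Finset.mem_range.1 hx)
  filter_upwards [h2] with n hn
  by_contra hlt
  exact hn (p n) (Finset.mem_range.2 (Nat.lt_of_not_le hlt)) rfl

lemma parAccept_iff {p : ℕ → ℕ} (h : ∃ x, ∃ᶠ n in atTop, p n = x) :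
    ParAccept p ↔ Even (minRec p h) := by
  constructor
  · rintro ⟨x, hev, hfreq, hx⟩
    have h1 : minRec p h ≤ x := minRec_le h hfreq
    have h2 : x ≤ minRec p h := by
      rcases ((minRec_rec h).and_eventually hx).exists with ⟨n, hn1, hn2⟩
      omega
    rwa [show minRec p h = x by omega]
  · intro hev
    exact ⟨minRec p h, hev, minRec_rec h, minRec_eventually h⟩

lemma beq_sum_iff (s a : ℕ⊕ℕ) : (s == a) = true ↔ s = a := by
  cases s <;> cases a <;>
    simp only [show ∀ x y : ℕ, ((Sum.inl x : ℕ⊕ℕ) == Sum.inl y) = (x == y) from fun _ _ => rfl,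
      show ∀ x y : ℕ, ((Sum.inr x : ℕ⊕ℕ) == Sum.inr y) = (x == y) from fun _ _ => rfl,
      show ∀ x y : ℕ, ((Sum.inl x : ℕ⊕ℕ) == Sum.inr y) = false from fun _ _ => rfl,
      show ∀ x y : ℕ, ((Sum.inr x : ℕ⊕ℕ) == Sum.inl y) = false from fun _ _ => rfl] <;>
    simp

instance : LawfulBEq (ℕ⊕ℕ) where
  eq_of_beq h := (beq_sum_iff _ _).1 h
  rfl := (beq_sum_iff _ _).2 rfl

lemma idx_cons_self (a : ℕ⊕ℕ) (l : TS) : (a :: l).idxOf a = 0 := by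
  simp [List.idxOf_cons]

lemma idx_cons_ne {a s : ℕ⊕ℕ} (l : TS) (h : s ≠ a) :
    (s :: l).idxOf a = l.idxOf a + 1 := by
  have : (s == a) = false := by
    by_contra hc
    exact h ((beq_sum_iff s a).1 (by simpa using hc))
  simp [List.idxOf_cons, this]

lemma idx_le_length (a : ℕ⊕ℕ) (l : TS) : l.idxOf a ≤ l.length := by
  induction l with
  | nil => simp
  | cons s t ih =>
    by_cases hsa : s = a
    · subst hsa; simp [idx_cons_self]
    · rw [idx_cons_ne t hsa]; simpa using ih

lemma idx_of_mem {a : ℕ⊕ℕ} {l : TS} (h : a ∈ l) :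
    l.idxOf a < l.length ∧ l[l.idxOf a]? = some a := by
  induction l with
  | nil => simp at h
  | cons s t ih =>
    by_cases hsa : s = a
    · subst hsa; simp [idx_cons_self]
    · rw [idx_cons_ne t hsa]
      have hmem : a ∈ t := by
        rcases List.mem_cons.1 h with h' | h'
        · exact absurd h'.symm hsa
        · exact h'
      rcases ih hmem with ⟨h1, h2⟩
      exact ⟨by simpa using h1, by simpa using h2⟩

lemma idx_le_of_getElem? {l : TS} {j : ℕ} {a : ℕ ⊕ ℕ} (h : l[j]? = some a) :
    l.idxOf a ≤ j := by
  induction l generalizing j with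
  | nil => simp at h
  | cons s t ih =>
    by_cases hsa : s = a
    · subst hsa; simp [idx_cons_self]
    · rw [idx_cons_ne t hsa]
      cases j with
      | zero => simp at h; exact absurd h hsa
      | succ j => have := ih (by simpa using h); omega

lemma mem_oddList {d a : ℕ} (hd : Odd d) : a ∈ oddList d ↔ a % 2 = 1 ∧ a ≤ d := by
  rcases hd with ⟨c, rfl⟩
  simp only [oddList, List.mem_map, List.mem_range]
  constructor
  · rintro ⟨i, hi, rfl⟩; omega
  · rintro ⟨h1, h2⟩; exact ⟨a / 2, by omega, by omega⟩

lemma oddList_pairwise (d : ℕ) : (oddList d).Pairwise (· < ·) := by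
  apply List.Pairwise.map
  · intro a b (h : a < b); omega
  · exact List.pairwise_lt_range

lemma getLeft?_eq_some {s : ℕ ⊕ ℕ} {a : ℕ} (h : s.getLeft? = some a) : s = Sum.inl a := by
  cases s <;> simp_all

lemma getRight?_eq_some {s : ℕ ⊕ ℕ} {a : ℕ} (h : s.getRight? = some a) : s = Sum.inr a := by
  cases s <;> simp_all

lemma mem_left {d₁ d₂ : ℕ} {τ : TS} (ht : IsTState d₁ d₂ τ) {a : ℕ}
    (ha : a ∈ oddList d₁) : Sum.inl a ∈ τ := by
  rw [← ht.1] at ha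
  rcases List.mem_filterMap.1 ha with ⟨s, hs, h⟩
  rwa [← getLeft?_eq_some h]

lemma mem_right {d₁ d₂ : ℕ} {τ : TS} (ht : IsTState d₁ d₂ τ) {a : ℕ}
    (ha : a ∈ oddList d₂) : Sum.inr a ∈ τ := by
  rw [← ht.2] at ha
  rcases List.mem_filterMap.1 ha with ⟨s, hs, h⟩
  rwa [← getRight?_eq_some h]

lemma ordL {d₁ d₂ : ℕ} {τ : TS} (ht : IsTState d₁ d₂ τ) {i j : ℕ}
    (hij : i < j) {a b : ℕ}
    (ha : τ[i]? = some (Sum.inl a)) (hb : τ[j]? = some (Sum.inl b)) : a < b := by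
  have hi : i < τ.length := by
    by_contra h; rw [List.getElem?_eq_none (by omega)] at ha; exact absurd ha (by simp)
  have hj : j < τ.length := by
    by_contra h; rw [List.getElem?_eq_none (by omega)] at hb; exact absurd hb (by simp)
  have ha' : τ[i] = Sum.inl a := by rwa [List.getElem?_eq_getElem hi, Option.some_inj] at ha
  have hb' : τ[j] = Sum.inl b := by rwa [List.getElem?_eq_getElem hj, Option.some_inj] at hb
  have hp : (τ.filterMap Sum.getLeft?).Pairwise (· < ·) := by
    rw [ht.1]; exact oddList_pairwise d₁
  rw [List.pairwise_filterMap] at hp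
  exact (List.pairwise_iff_getElem.1 hp) i j hi hj hij a (by rw [ha']; rfl) b (by rw [hb']; rfl)

lemma ordR {d₁ d₂ : ℕ} {τ : TS} (ht : IsTState d₁ d₂ τ) {i j : ℕ}
    (hij : i < j) {a b : ℕ}
    (ha : τ[i]? = some (Sum.inr a)) (hb : τ[j]? = some (Sum.inr b)) : a < b := by
  have hi : i < τ.length := by
    by_contra h; rw [List.getElem?_eq_none (by omega)] at ha; exact absurd ha (by simp)
  have hj : j < τ.length := by
    by_contra h; rw [List.getElem?_eq_none (by omega)] at hb; exact absurd hb (by simp)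
  have ha' : τ[i] = Sum.inr a := by rwa [List.getElem?_eq_getElem hi, Option.some_inj] at ha
  have hb' : τ[j] = Sum.inr b := by rwa [List.getElem?_eq_getElem hj, Option.some_inj] at hb
  have hp : (τ.filterMap Sum.getRight?).Pairwise (· < ·) := by
    rw [ht.2]; exact oddList_pairwise d₂
  rw [List.pairwise_filterMap] at hp
  exact (List.pairwise_iff_getElem.1 hp) i j hi hj hij a (by rw [ha']; rfl) b (by rw [hb']; rfl)

lemma length_eq_sum (τ : TS) :
    τ.length = (τ.filterMap Sum.getLeft?).length + (τ.filterMap Sum.getRight?).length := by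
  induction τ with
  | nil => rfl
  | cons s t ih => cases s <;> simp [List.filterMap_cons, ih] <;> omega

lemma reconfig_none {τ : TS} {i : ℕ} {side : Bool}
    (h : (τ.drop i).findIdx? (fun s => s.isLeft == side) = none) :
    reconfig τ i side = τ := by
  unfold reconfig; rw [h]

lemma take_reconfig {τ : TS} {i b : ℕ} {side : Bool} (hb : b ≤ i - 1) (hb2 : b ≤ τ.length) :
    (reconfig τ i side).take b = τ.take b := by
  unfold reconfig
  rcases h : (τ.drop i).findIdx? (fun s => s.isLeft == side) with _ | k
  · rw [h]
  · rw [h]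
    rw [List.take_append]
    have hlen : (τ.take (i-1)).length = min (i-1) τ.length := by simp
    rw [List.take_take]
    have h1 : min b (i-1) = b := by omega
    have h2 : b - (τ.take (i-1)).length = 0 := by omega
    rw [h1, h2]
    simp

lemma findIdx?_first {P Q : TS} {e : ℕ ⊕ ℕ} {pred : (ℕ⊕ℕ) → Bool}
    (hP : ∀ x ∈ P, pred x = false) (he : pred e = true) :
    (P ++ e :: Q).findIdx? pred = some P.length := by
  induction P with
  | nil => simp [List.findIdx?_cons, he]
  | cons p P ih =>
    rw [List.cons_append, List.findIdx?_cons, hP p (by simp)]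
    rw [if_neg (by simp), ih fun x hx => hP x (by simp [hx])]
    simp

lemma reconfig_eq {A P Q : TS} {c e : ℕ⊕ℕ} {side : Bool}
    (hP : ∀ x ∈ P, (x.isLeft == side) = false) (he : (e.isLeft == side) = true) :
    reconfig (A ++ c :: (P ++ e :: Q)) (A.length + 1) side
      = A ++ e :: c :: (P ++ Q) := by
  have hdrop : (A ++ c :: (P ++ e :: Q)).drop (A.length + 1) = P ++ e :: Q := by
    have := List.drop_append (l₁ := A) (l₂ := c :: (P ++ e :: Q)) (i := A.length + 1)
    simpa using this
  have hdrop' : (A ++ c :: (P ++ e :: Q)).drop A.length = c :: (P ++ e :: Q) :=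
    List.drop_left
  have htake : (A ++ c :: (P ++ e :: Q)).take A.length = A := List.take_left
  unfold reconfig
  rw [hdrop, findIdx?_first hP he]
  simp only [Nat.add_sub_cancel, htake, hdrop']
  congr 1
  have hg : (P ++ e :: Q).getD P.length (Sum.inl 0) = e := by
    rw [List.getD_eq_getElem?_getD, List.getElem?_append_right (le_refl _)]
    simp
  rw [hg]
  congr 1
  rw [List.eraseIdx_cons_succ, List.eraseIdx_append_of_length_le (le_refl _)]
  simp

lemma getElem?_reconfig_eq {A P Q : TS} {c e : ℕ⊕ℕ} {side : Bool}
    (hP : ∀ x ∈ P, (x.isLeft == side) = false) (he : (e.isLeft == side) = true) :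
    (reconfig (A ++ c :: (P ++ e :: Q)) (A.length + 1) side)[A.length]? = some e := by
  rw [reconfig_eq hP he, List.getElem?_append_right (le_refl _)]
  simp

lemma filterMap_swap_none {α : Type} {A P Q : TS} {c e : ℕ⊕ℕ} {f : (ℕ⊕ℕ) → Option α}
    (hfe : f e = none) :
    (A ++ e :: c :: (P ++ Q)).filterMap f = (A ++ c :: (P ++ e :: Q)).filterMap f := by
  simp only [List.filterMap_append, List.filterMap_cons, hfe]
  all_goals cases f c <;> simp [List.filterMap_append]

lemma filterMap_swap_some {α : Type} {A P Q : TS} {c e : ℕ⊕ℕ} {f : (ℕ⊕ℕ) → Option α}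
    (hfc : f c = none) (hfP : ∀ x ∈ P, f x = none) :
    (A ++ e :: c :: (P ++ Q)).filterMap f = (A ++ c :: (P ++ e :: Q)).filterMap f := by
  have hP : P.filterMap f = [] := List.filterMap_eq_nil_iff.2 hfP
  simp only [List.filterMap_append, List.filterMap_cons, hfc, hP]
  cases f e <;> simp [List.filterMap_append, hP]
/-! ## Anchors and `ind` -/

def anchor (p : ℕ) : ℕ := if p % 2 = 1 then p else p - 1

lemma ind_eq_left {τ : TS} {p : ℕ} (hp : p ≠ 0) :
    ind τ true p = τ.idxOf (Sum.inl (anchor p)) + 1 := by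
  simp [ind, anchor, hp]

lemma ind_eq_right {τ : TS} {p : ℕ} (hp : p ≠ 0) :
    ind τ false p = τ.idxOf (Sum.inr (anchor p)) + 1 := by
  simp [ind, anchor, hp]

lemma anchor_mem {d p : ℕ} (hd : Odd d) (hp : p ≠ 0) (hpd : p ≤ d) :
    anchor p ∈ oddList d := by
  rw [mem_oddList hd]; unfold anchor; split <;> omega

lemma anchor_odd_self {p : ℕ} (hp : p % 2 = 1) : anchor p = p := by simp [anchor, hp]

/-- `Tstep` case analysis. -/
lemma Tstep_cases (τ : TS) (y z : ℕ) :
    (y % 2 = 0 ∧ ind τ true y ≤ ind τ false z ∧ Tstep τ y z = (2 * ind τ true y, τ)) ∨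
    (y % 2 = 1 ∧ ind τ true y ≤ ind τ false z ∧
      Tstep τ y z = (2 * ind τ true y - 1, reconfig τ (ind τ true y) false)) ∨
    (z % 2 = 0 ∧ ind τ false z < ind τ true y ∧ Tstep τ y z = (2 * ind τ false z, τ)) ∨
    (z % 2 = 1 ∧ ind τ false z < ind τ true y ∧
      Tstep τ y z = (2 * ind τ false z - 1, reconfig τ (ind τ false z) true)) := by
  unfold Tstep
  by_cases h1 : ind τ true y ≤ ind τ false z
  · by_cases h2 : y % 2 = 0
    · exact Or.inl ⟨h2, h1, by simp [h1, h2]⟩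
    · exact Or.inr (Or.inl ⟨by omega, h1, by simp [h1, h2]⟩)
  · by_cases h2 : z % 2 = 0
    · exact Or.inr (Or.inr (Or.inl ⟨h2, by omega, by simp [h1, h2]⟩))
    · exact Or.inr (Or.inr (Or.inr ⟨by omega, by omega, by simp [h1, h2]⟩))

lemma Tstep_out_le (τ : TS) (y z : ℕ) :
    (Tstep τ y z).1 ≤ 2 * ind τ true y ∧ (Tstep τ y z).1 ≤ 2 * ind τ false z := by
  rcases Tstep_cases τ y z with ⟨_, h1, h⟩ | ⟨_, h1, h⟩ | ⟨_, h1, h⟩ | ⟨_, h1, h⟩ <;>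
    rw [h] <;> constructor <;> simp <;> omega

/-! ## First splits -/

lemma exists_first_split {l : TS} {pred : (ℕ⊕ℕ) → Bool} (h : ∃ x ∈ l, pred x = true) :
    ∃ P e Q, l = P ++ e :: Q ∧ (∀ x ∈ P, pred x = false) ∧ pred e = true := by
  induction l with
  | nil => simp at h
  | cons s t ih =>
    by_cases hs : pred s = true
    · exact ⟨[], s, t, by simp, by simp, hs⟩
    · have : ∃ x ∈ t, pred x = true := by
        rcases h with ⟨x, hx, hpx⟩
        rcases List.mem_cons.1 hx with rfl | hx
        · exact absurd hpx hs
        · exact ⟨x, hx, hpx⟩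
      rcases ih this with ⟨P, e, Q, rfl, hP, he⟩
      exact ⟨s :: P, e, Q, by simp, by
        intro x hx
        rcases List.mem_cons.1 hx with rfl | hx
        · exact Bool.eq_false_iff.2 hs
        · exact hP x hx, he⟩

lemma getElem?_lt_length {l : TS} {j : ℕ} {c : ℕ⊕ℕ} (hj : l[j]? = some c) : j < l.length := by
  by_contra h
  rw [List.getElem?_eq_none (by omega)] at hj
  exact absurd hj (by simp)

/-- Decomposition of `τ` around position `j` and the first `side`-element after it. -/
lemma state_decomp {τ : TS} {j : ℕ} {c : ℕ⊕ℕ} {side : Bool}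
    (hj : τ[j]? = some c)
    (hex : ∃ x ∈ τ.drop (j+1), (x.isLeft == side) = true) :
    ∃ P e Q, τ = (τ.take j) ++ c :: (P ++ e :: Q) ∧ (τ.take j).length = j ∧
      (∀ x ∈ P, (x.isLeft == side) = false) ∧ ((e : ℕ⊕ℕ).isLeft == side) = true := by
  rcases exists_first_split hex with ⟨P, e, Q, hsplit, hP, he⟩
  have hjl : j < τ.length := getElem?_lt_length hj
  refine ⟨P, e, Q, ?_, by simp; omega, hP, he⟩
  conv_lhs => rw [← List.take_append_drop (j+1) τ]
  rw [List.take_succ, hj, ← hsplit]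
  simp

lemma isLeft_getLeft?_none {x : ℕ⊕ℕ} (h : x.isLeft = false) : x.getLeft? = none := by
  cases x <;> simp_all

lemma isLeft_getRight?_none {x : ℕ⊕ℕ} (h : x.isLeft = true) : x.getRight? = none := by
  cases x <;> simp_all

/-- Preservation of `IsTState` by `reconfig`, plus the new element at position `j`. -/
lemma reconfig_preserve {d₁ d₂ : ℕ} {τ : TS} (ht : IsTState d₁ d₂ τ) {j : ℕ} {c : ℕ⊕ℕ}
    {side : Bool} (hj : τ[j]? = some c) (hc : (c.isLeft == side) = false) :
    IsTState d₁ d₂ (reconfig τ (j+1) side) ∧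
    ((∃ x ∈ τ.drop (j+1), (x.isLeft == side) = true) →
      ∃ e, ((e : ℕ⊕ℕ).isLeft == side) = true ∧ (reconfig τ (j+1) side)[j]? = some e) := by
  by_cases hex : ∃ x ∈ τ.drop (j+1), (x.isLeft == side) = true
  · rcases state_decomp hj hex with ⟨P, e, Q, hdec, hlen, hP, he⟩
    have hre : reconfig τ (j+1) side = (τ.take j) ++ e :: c :: (P ++ Q) := by
      conv_lhs => rw [hdec]
      rw [show j + 1 = (τ.take j).length + 1 by rw [hlen]]
      exact reconfig_eq hP he
    constructor
    · constructor
      · rw [hre, ← ht.1]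
        conv_rhs => rw [hdec]
        cases hside : side
        · -- side = false : e is a right element, getLeft? e = none
          subst hside
          apply filterMap_swap_none
          apply isLeft_getLeft?_none
          simpa using he
        · -- side = true : c and P are right elements
          subst hside
          apply filterMap_swap_some
          · exact isLeft_getLeft?_none (by simpa using hc)
          · intro x hx; exact isLeft_getLeft?_none (by simpa using hP x hx)
      · rw [hre, ← ht.2]
        conv_rhs => rw [hdec]
        cases hside : side
        · subst hside
          apply filterMap_swap_some
          · exact isLeft_getRight?_none (by simpa using hc)
          · intro x hx; exact isLeft_getRight?_none (by simpa using hP x hx)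
        · subst hside
          apply filterMap_swap_none
          apply isLeft_getRight?_none
          simpa using he
    · intro _
      refine ⟨e, he, ?_⟩
      rw [hre, List.getElem?_append_right (by omega), hlen]
      simp
  · have hnone : (τ.drop (j+1)).findIdx? (fun s => s.isLeft == side) = none := by
      rw [List.findIdx?_eq_none_iff]
      intro x hx
      by_contra h
      exact hex ⟨x, hx, by simpa using h⟩
    rw [reconfig_none hnone]
    exact ⟨ht, fun h => absurd h hex⟩

/-- If position `j` is a non-`side` element and there is no `side` element after `j`,
then every `side` element has index `< j`. -/
lemma idx_lt_of_no_after {τ : TS} {j : ℕ} {c : ℕ⊕ℕ} {side : Bool}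
    (hj : τ[j]? = some c) (hc : (c.isLeft == side) = false)
    (hnone : ∀ x ∈ τ.drop (j+1), (x.isLeft == side) = false)
    {x : ℕ⊕ℕ} (hx : x ∈ τ) (hxs : (x.isLeft == side) = true) :
    τ.idxOf x < j := by
  rcases List.mem_iff_getElem?.1 hx with ⟨m, hm⟩
  have hmj : m < j := by
    rcases lt_trichotomy m j with h | h | h
    · exact h
    · subst h
      rw [hj] at hm
      cases hm
      rw [hxs] at hc
      exact Bool.noConfusion hc
    · exfalso
      have : x ∈ τ.drop (j+1) := by
        rw [List.mem_iff_getElem?]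
        exact ⟨m - (j+1), by rw [List.getElem?_drop]; rw [← hm]; congr 1; omega⟩
      rw [hnone x this] at hxs
      exact Bool.noConfusion hxs
  exact lt_of_le_of_lt (idx_le_of_getElem? hm) hmj
/-! ## Small `ind` lemmas -/

lemma ind_pos {τ : TS} {s : Bool} {p : ℕ} (hp : p ≠ 0) : 1 ≤ ind τ s p := by
  simp [ind, hp]

lemma ind_eq_zero {τ : TS} {s : Bool} {p : ℕ} (hp : p = 0) : ind τ s p = 0 := by
  simp [ind, hp]

lemma ind_le_len_left {d₁ d₂ : ℕ} (h1 : Odd d₁) {τ : TS} (ht : IsTState d₁ d₂ τ)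
    {p : ℕ} (hp : p ≠ 0) (hpd : p ≤ d₁) : ind τ true p ≤ τ.length := by
  rw [ind_eq_left hp]
  have := (idx_of_mem (mem_left ht (anchor_mem h1 hp hpd))).1
  omega

lemma ind_le_len_right {d₁ d₂ : ℕ} (h2 : Odd d₂) {τ : TS} (ht : IsTState d₁ d₂ τ)
    {p : ℕ} (hp : p ≠ 0) (hpd : p ≤ d₂) : ind τ false p ≤ τ.length := by
  rw [ind_eq_right hp]
  have := (idx_of_mem (mem_right ht (anchor_mem h2 hp hpd))).1
  omega

lemma ind_le_len_succ (τ : TS) (s : Bool) (p : ℕ) : ind τ s p ≤ τ.length + 1 := by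
  unfold ind
  split
  · omega
  · have ha := idx_le_length (Sum.inl (if p % 2 = 1 then p else p - 1)) τ
    have hb := idx_le_length (Sum.inr (if p % 2 = 1 then p else p - 1)) τ
    split <;> omega

/-! ## Event helpers -/

lemma helper_even {d₁ d₂ : ℕ} (h1 : Odd d₁) (h2 : Odd d₂) {τ : TS} (ht : IsTState d₁ d₂ τ)
    {y z b : ℕ} (hy : y ≤ d₁) (hz1 : 1 ≤ z) (hz : z ≤ d₂) (hb : 1 ≤ b)
    (hout : (Tstep τ y z).1 = 2 * b) :
    (Tstep τ y z).2 = τ ∧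
    ((y % 2 = 0 ∧ 1 ≤ y ∧ τ[b-1]? = some (Sum.inl (y-1))) ∨
     (z % 2 = 0 ∧ τ[b-1]? = some (Sum.inr (z-1)))) := by
  rcases Tstep_cases τ y z with ⟨hp, hcmp, heq⟩ | ⟨hp, hcmp, heq⟩ | ⟨hp, hcmp, heq⟩ | ⟨hp, hcmp, heq⟩ <;>
      rw [heq] at hout ⊢ <;> simp only at hout ⊢
  · -- even y
    have hiy : ind τ true y = b := by omega
    have hy0 : y ≠ 0 := by
      intro h; rw [ind_eq_zero h] at hiy; omega
    have hanch : anchor y = y - 1 := by unfold anchor; split <;> omega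
    have hidx := idx_of_mem (mem_left ht (anchor_mem h1 hy0 hy))
    rw [ind_eq_left hy0] at hiy
    refine ⟨by trivial, Or.inl ⟨hp, by omega, ?_⟩⟩
    rw [show b - 1 = τ.idxOf (Sum.inl (anchor y)) by omega, ← hanch]
    exact hidx.2
  · -- odd y : impossible, output odd
    exfalso
    have := ind_pos (τ := τ) (s := true) (p := y) (by omega)
    omega
  · -- even z
    have hiz : ind τ false z = b := by omega
    have hz0 : z ≠ 0 := by omega
    have hanch : anchor z = z - 1 := by unfold anchor; split <;> omega
    have hidx := idx_of_mem (mem_right ht (anchor_mem h2 hz0 hz))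
    rw [ind_eq_right hz0] at hiz
    refine ⟨by trivial, Or.inr ⟨hp, ?_⟩⟩
    rw [show b - 1 = τ.idxOf (Sum.inr (anchor z)) by omega, ← hanch]
    exact hidx.2
  · exfalso
    have := ind_pos (τ := τ) (s := false) (p := z) (by omega)
    omega

lemma helper_odd {d₁ d₂ : ℕ} (h1 : Odd d₁) (h2 : Odd d₂) {τ : TS} (ht : IsTState d₁ d₂ τ)
    {y z b : ℕ} (hy : y ≤ d₁) (hz1 : 1 ≤ z) (hz : z ≤ d₂) (hb : 1 ≤ b)
    (hout : (Tstep τ y z).1 = 2 * b - 1) :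
    (y % 2 = 1 ∧ τ[b-1]? = some (Sum.inl y) ∧ b ≤ ind τ false z ∧
        (Tstep τ y z).2 = reconfig τ b false) ∨
    (z % 2 = 1 ∧ τ[b-1]? = some (Sum.inr z) ∧ b < ind τ true y ∧
        (Tstep τ y z).2 = reconfig τ b true) := by
  rcases Tstep_cases τ y z with ⟨hp, hcmp, heq⟩ | ⟨hp, hcmp, heq⟩ | ⟨hp, hcmp, heq⟩ | ⟨hp, hcmp, heq⟩ <;>
      rw [heq] at hout ⊢ <;> simp only at hout ⊢
  · -- even y : output even, impossible
    exfalso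
    rcases Nat.eq_zero_or_pos (ind τ true y) with h | h
    · omega
    · omega
  · -- odd y
    have hy0 : y ≠ 0 := by omega
    have hpos := ind_pos (τ := τ) (s := true) hy0
    have hiy : ind τ true y = b := by omega
    have hiy' := hiy
    have hanch : anchor y = y := anchor_odd_self hp
    have hidx := idx_of_mem (mem_left ht (anchor_mem h1 hy0 hy))
    rw [ind_eq_left hy0] at hiy'
    refine Or.inl ⟨hp, ?_, by omega, by rw [hiy]⟩
    have hg : τ[b-1]? = some (Sum.inl (anchor y)) := by
      rw [show b - 1 = τ.idxOf (Sum.inl (anchor y)) by omega]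
      exact hidx.2
    rwa [hanch] at hg
  · exfalso
    have := ind_pos (τ := τ) (s := false) (p := z) (by omega)
    omega
  · -- odd z
    have hz0 : z ≠ 0 := by omega
    have hpos := ind_pos (τ := τ) (s := false) hz0
    have hiz : ind τ false z = b := by omega
    have hiz' := hiz
    have hanch : anchor z = z := anchor_odd_self hp
    have hidx := idx_of_mem (mem_right ht (anchor_mem h2 hz0 hz))
    rw [ind_eq_right hz0] at hiz'
    refine Or.inr ⟨hp, ?_, by omega, by rw [hiz]⟩
    have hg : τ[b-1]? = some (Sum.inr (anchor z)) := by
      rw [show b - 1 = τ.idxOf (Sum.inr (anchor z)) by omega]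
      exact hidx.2
    rwa [hanch] at hg
/-! ## Run infrastructure -/

lemma run_invariant {d₁ d₂ : ℕ} {τ₀ : TS} {w : ℕ → ℕ × ℕ}
    (h1 : Odd d₁) (h2 : Odd d₂) (hτ : IsTState d₁ d₂ τ₀)
    (hw : ∀ n, (w n).1 ≤ d₁ ∧ 1 ≤ (w n).2 ∧ (w n).2 ≤ d₂) :
    ∀ n, IsTState d₁ d₂ (Tstate τ₀ w n) := by
  intro n
  induction n with
  | zero => exact hτ
  | succ n ih =>
    show IsTState _ _ (Tstep (Tstate τ₀ w n) (w n).1 (w n).2).2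
    obtain ⟨hy, hz1, hz⟩ := hw n
    rcases Tstep_cases (Tstate τ₀ w n) (w n).1 (w n).2 with
      ⟨hp, hcmp, heq⟩ | ⟨hp, hcmp, heq⟩ | ⟨hp, hcmp, heq⟩ | ⟨hp, hcmp, heq⟩ <;>
        rw [heq] <;> simp only
    · exact ih
    · have hy0 : (w n).1 ≠ 0 := by omega
      have hidx := idx_of_mem (mem_left ih (anchor_mem h1 hy0 hy))
      rw [ind_eq_left hy0]
      exact (reconfig_preserve ih hidx.2 (by simp)).1
    · exact ih
    · have hz0 : (w n).2 ≠ 0 := by omega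
      have hidx := idx_of_mem (mem_right ih (anchor_mem h2 hz0 hz))
      rw [ind_eq_right hz0]
      exact (reconfig_preserve ih hidx.2 (by simp)).1

lemma run_length {d₁ d₂ : ℕ} {τ₀ : TS} {w : ℕ → ℕ × ℕ}
    (h1 : Odd d₁) (h2 : Odd d₂) (hτ : IsTState d₁ d₂ τ₀)
    (hw : ∀ n, (w n).1 ≤ d₁ ∧ 1 ≤ (w n).2 ∧ (w n).2 ≤ d₂) (n : ℕ) :
    (Tstate τ₀ w n).length = (oddList d₁).length + (oddList d₂).length := by
  have ht := run_invariant h1 h2 hτ hw n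
  rw [length_eq_sum, ht.1, ht.2]

lemma run_out_le {τ₀ : TS} {w : ℕ → ℕ × ℕ} (n : ℕ) :
    Tout τ₀ w n ≤ 2 * ind (Tstate τ₀ w n) true (w n).1 ∧
    Tout τ₀ w n ≤ 2 * ind (Tstate τ₀ w n) false (w n).2 :=
  Tstep_out_le _ _ _

lemma run_out_bound {d₁ d₂ : ℕ} {τ₀ : TS} {w : ℕ → ℕ × ℕ}
    (h1 : Odd d₁) (h2 : Odd d₂) (hτ : IsTState d₁ d₂ τ₀)
    (hw : ∀ n, (w n).1 ≤ d₁ ∧ 1 ≤ (w n).2 ∧ (w n).2 ≤ d₂) (n : ℕ) :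
    Tout τ₀ w n ≤ 2 * ((oddList d₁).length + (oddList d₂).length + 1) := by
  have h := (run_out_le (τ₀ := τ₀) (w := w) n).1
  have h2' := ind_le_len_succ (Tstate τ₀ w n) true (w n).1
  have h3 := run_length h1 h2 hτ hw n
  omega

lemma run_take_stable {τ₀ : TS} {w : ℕ → ℕ × ℕ}
    {n b : ℕ} (hb2 : b ≤ (Tstate τ₀ w n).length) (h : 2 * b ≤ Tout τ₀ w n) :
    (Tstate τ₀ w (n+1)).take b = (Tstate τ₀ w n).take b := by
  show ((Tstep (Tstate τ₀ w n) (w n).1 (w n).2).2).take b = _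
  have hout : Tout τ₀ w n = (Tstep (Tstate τ₀ w n) (w n).1 (w n).2).1 := rfl
  rcases Tstep_cases (Tstate τ₀ w n) (w n).1 (w n).2 with
    ⟨hp, hcmp, heq⟩ | ⟨hp, hcmp, heq⟩ | ⟨hp, hcmp, heq⟩ | ⟨hp, hcmp, heq⟩ <;>
      rw [heq] <;> simp only <;> rw [hout, heq] at h <;> simp only at h <;>
      first
        | rfl
        | exact take_reconfig (by omega) hb2

lemma run_take_stable_from {τ₀ : TS} {w : ℕ → ℕ × ℕ}
    {T b : ℕ} (hb2 : ∀ n, b ≤ (Tstate τ₀ w n).length)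
    (h : ∀ n ≥ T, 2 * b ≤ Tout τ₀ w n) :
    ∀ n ≥ T, (Tstate τ₀ w n).take b = (Tstate τ₀ w T).take b := by
  intro n hn
  induction n, hn using Nat.le_induction with
  | base => rfl
  | succ n hn ih => rw [run_take_stable (hb2 n) (h n hn)]; exact ih

lemma getElem?_eq_of_take_eq {l l' : TS} {b j : ℕ} (h : l.take b = l'.take b) (hj : j < b) :
    l[j]? = l'[j]? := by
  have h1 : (l.take b)[j]? = l[j]? := by rw [List.getElem?_take]; simp [hj]
  have h2 : (l'.take b)[j]? = l'[j]? := by rw [List.getElem?_take]; simp [hj]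
  rw [← h1, ← h2, h]
/-! ## Main lemma, even case -/

lemma lemA {d₁ d₂ : ℕ} {τ₀ : TS} {w : ℕ → ℕ × ℕ}
    (h1 : Odd d₁) (h2 : Odd d₂) (hτ : IsTState d₁ d₂ τ₀)
    (hw : ∀ n, (w n).1 ≤ d₁ ∧ 1 ≤ (w n).2 ∧ (w n).2 ≤ d₂) {b : ℕ}
    (hfreq : ∃ᶠ n in atTop, Tout τ₀ w n = 2 * b)
    (hev : ∀ᶠ n in atTop, 2 * b ≤ Tout τ₀ w n) :
    ParAccept (fun n => (w n).1) ∨ ParAccept (fun n => (w n).2) := by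
  have hexY : ∃ x, ∃ᶠ n in atTop, (fun n => (w n).1) n = x :=
    exists_rec (B := d₁) (fun n => (hw n).1)
  have hexZ : ∃ x, ∃ᶠ n in atTop, (fun n => (w n).2) n = x :=
    exists_rec (B := d₂) (fun n => (hw n).2.2)
  rcases Nat.eq_zero_or_pos b with hb0 | hbpos
  · -- b = 0 : frequently y = 0
    subst hb0
    have hfy : ∃ᶠ n in atTop, (fun n => (w n).1) n = 0 := by
      refine hfreq.mono fun n hn => ?_
      rcases Tstep_cases (Tstate τ₀ w n) (w n).1 (w n).2 with
        ⟨hp, hcmp, heq⟩ | ⟨hp, hcmp, heq⟩ | ⟨hp, hcmp, heq⟩ | ⟨hp, hcmp, heq⟩ <;>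
          rw [show Tout τ₀ w n = (Tstep (Tstate τ₀ w n) (w n).1 (w n).2).1 from rfl, heq] at hn <;>
          simp only at hn
      · show (w n).1 = 0
        by_contra hy0
        have := ind_pos (τ := Tstate τ₀ w n) (s := true) hy0
        omega
      · have := ind_pos (τ := Tstate τ₀ w n) (s := true) (p := (w n).1) (by omega)
        omega
      · exfalso
        have := ind_pos (τ := Tstate τ₀ w n) (s := false) (p := (w n).2) (by have := (hw n).2.1; omega)
        omega
      · exfalso
        have := ind_pos (τ := Tstate τ₀ w n) (s := false) (p := (w n).2) (by have := (hw n).2.1; omega)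
        omega
    have hY0 : minRec _ hexY = 0 := Nat.le_zero.1 (minRec_le hexY hfy)
    exact Or.inl ⟨minRec _ hexY, by rw [hY0]; exact Even.zero,
      minRec_rec hexY, minRec_eventually hexY⟩
  · obtain ⟨T, hT⟩ := eventually_atTop.1 hev
    obtain ⟨n₀, hn₀T, hn₀⟩ := frequently_atTop.1 hfreq T
    have htn₀ := run_invariant h1 h2 hτ hw n₀
    obtain ⟨-, hcase⟩ :=
      helper_even h1 h2 htn₀ (hw n₀).1 (hw n₀).2.1 (hw n₀).2.2 hbpos hn₀
    have hblen : ∀ n, b ≤ (Tstate τ₀ w n).length := by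
      intro n
      rw [run_length h1 h2 hτ hw n, ← run_length h1 h2 hτ hw n₀]
      rcases hcase with ⟨_, _, hg⟩ | ⟨_, hg⟩ <;> have := getElem?_lt_length hg <;> omega
    have hstab := run_take_stable_from hblen hT
    have hkey : ∀ n ≥ T, (Tstate τ₀ w n)[b-1]? = (Tstate τ₀ w n₀)[b-1]? := by
      intro n hn
      exact (getElem?_eq_of_take_eq (hstab n hn) (by omega)).trans
        (getElem?_eq_of_take_eq (hstab n₀ hn₀T) (by omega)).symm
    rcases hcase with ⟨hyp, hy1, hg⟩ | ⟨hzp, hg⟩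
    · -- left case
      set a := (w n₀).1 - 1 with ha
      have hfreq1 : ∃ᶠ n in atTop, (fun n => (w n).1) n = a + 1 := by
        rw [frequently_atTop]
        intro M
        obtain ⟨n, hnM, hn⟩ := frequently_atTop.1 hfreq (max M T)
        have htn := run_invariant h1 h2 hτ hw n
        obtain ⟨-, hc⟩ :=
          helper_even h1 h2 htn (hw n).1 (hw n).2.1 (hw n).2.2 hbpos hn
        have hkn := hkey n (le_trans (le_max_right M T) hnM)
        rcases hc with ⟨_, hy1', hg'⟩ | ⟨_, hg'⟩
        · rw [hkn, hg] at hg'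
          have : (w n).1 - 1 = a := by
            have := Option.some.inj hg'
            exact (Sum.inl.inj this).symm
          exact ⟨n, le_trans (le_max_left M T) hnM, by exact (by omega : (w n).1 = a + 1)⟩
        · rw [hkn, hg] at hg'
          exact absurd (Option.some.inj hg') (by simp)
      have hYle : minRec _ hexY ≤ a + 1 := minRec_le hexY hfreq1
      have hge : a + 1 ≤ minRec _ hexY := by
        by_contra hY
        push_neg at hY
        set Y := minRec _ hexY with hYdef
        obtain ⟨n, hnT, hπ⟩ := frequently_atTop.1 (minRec_rec hexY) T
        have hπ' : (w n).1 = Y := hπ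
        clear hπ
        have hπ := hπ'
        have houtn := hT n hnT
        have hle1 := (run_out_le (τ₀ := τ₀) (w := w) n).1
        have hle2 := (run_out_le (τ₀ := τ₀) (w := w) n).2
        have htn := run_invariant h1 h2 hτ hw n
        have hY0 : Y ≠ 0 := by
          intro h0
          rw [hπ, h0] at hle1
          rw [ind_eq_zero rfl] at hle1
          omega
        have hYd : Y ≤ d₁ := by rw [← hπ]; exact (hw n).1
        have hidx := idx_of_mem (mem_left htn (anchor_mem h1 hY0 hYd))
        set j := (Tstate τ₀ w n).idxOf (Sum.inl (anchor Y)) with hj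
        have hiy_eq : ind (Tstate τ₀ w n) true (w n).1 = j + 1 := by
          rw [hπ]; exact ind_eq_left hY0
        have hjb : b - 1 ≤ j := by omega
        have hgn : (Tstate τ₀ w n)[b-1]? = some (Sum.inl a) := (hkey n hnT).trans hg
        rcases eq_or_lt_of_le hjb with hjeq | hjlt
        · have hthis : (Tstate τ₀ w n)[b-1]? = some (Sum.inl (anchor Y)) := by
            rw [hjeq]; exact hidx.2
          rw [hgn] at hthis
          have hanchYa : anchor Y = a := (Sum.inl.inj (Option.some.inj hthis)).symm
          have hYodd : Y % 2 = 1 ∧ Y = a := by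
            unfold anchor at hanchYa
            split at hanchYa <;> omega
          have hiy_b : ind (Tstate τ₀ w n) true (w n).1 = b := by omega
          have hizb : b ≤ ind (Tstate τ₀ w n) false (w n).2 := by omega
          rcases Tstep_cases (Tstate τ₀ w n) (w n).1 (w n).2 with
            ⟨hp, hcmp, heq⟩ | ⟨hp, hcmp, heq⟩ | ⟨hp, hcmp, heq⟩ | ⟨hp, hcmp, heq⟩ <;>
              rw [show Tout τ₀ w n = (Tstep (Tstate τ₀ w n) (w n).1 (w n).2).1 from rfl, heq]
                at houtn <;> simp only at houtn
          · rw [hπ] at hp; omega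
          · omega
          · omega
          · omega
        · have hba := ordL htn hjlt hgn hidx.2
          have : anchor Y ≤ Y := by unfold anchor; split <;> omega
          omega
      have heva : Even (a + 1) := by
        rw [Nat.even_iff]; omega
      exact Or.inl ⟨minRec _ hexY, by rw [show minRec _ hexY = a + 1 by omega]; exact heva,
        minRec_rec hexY, minRec_eventually hexY⟩
    · -- right case
      set a := (w n₀).2 - 1 with ha
      have hz1 : 1 ≤ (w n₀).2 := (hw n₀).2.1
      have hfreq1 : ∃ᶠ n in atTop, (fun n => (w n).2) n = a + 1 := by
        rw [frequently_atTop]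
        intro M
        obtain ⟨n, hnM, hn⟩ := frequently_atTop.1 hfreq (max M T)
        have htn := run_invariant h1 h2 hτ hw n
        obtain ⟨-, hc⟩ :=
          helper_even h1 h2 htn (hw n).1 (hw n).2.1 (hw n).2.2 hbpos hn
        have hkn := hkey n (le_trans (le_max_right M T) hnM)
        rcases hc with ⟨_, hy1', hg'⟩ | ⟨_, hg'⟩
        · rw [hkn, hg] at hg'
          exact absurd (Option.some.inj hg') (by simp)
        · rw [hkn, hg] at hg'
          have : (w n).2 - 1 = a := by
            have := Option.some.inj hg'
            exact (Sum.inr.inj this).symm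
          have hz1' : 1 ≤ (w n).2 := (hw n).2.1
          exact ⟨n, le_trans (le_max_left M T) hnM, by exact (by omega : (w n).2 = a + 1)⟩
      have hYle : minRec _ hexZ ≤ a + 1 := minRec_le hexZ hfreq1
      have hge : a + 1 ≤ minRec _ hexZ := by
        by_contra hY
        push_neg at hY
        set Y := minRec _ hexZ with hYdef
        obtain ⟨n, hnT, hπ⟩ := frequently_atTop.1 (minRec_rec hexZ) T
        have hπ' : (w n).2 = Y := hπ
        clear hπ
        have hπ := hπ'
        have houtn := hT n hnT
        have hle1 := (run_out_le (τ₀ := τ₀) (w := w) n).1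
        have hle2 := (run_out_le (τ₀ := τ₀) (w := w) n).2
        have htn := run_invariant h1 h2 hτ hw n
        have hY0 : Y ≠ 0 := by
          intro h0
          rw [hπ, h0] at hle2
          rw [ind_eq_zero rfl] at hle2
          omega
        have hYd : Y ≤ d₂ := by rw [← hπ]; exact (hw n).2.2
        have hidx := idx_of_mem (mem_right htn (anchor_mem h2 hY0 hYd))
        set j := (Tstate τ₀ w n).idxOf (Sum.inr (anchor Y)) with hj
        have hiz_eq : ind (Tstate τ₀ w n) false (w n).2 = j + 1 := by
          rw [hπ]; exact ind_eq_right hY0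
        have hjb : b - 1 ≤ j := by omega
        have hgn : (Tstate τ₀ w n)[b-1]? = some (Sum.inr a) := (hkey n hnT).trans hg
        rcases eq_or_lt_of_le hjb with hjeq | hjlt
        · have hthis : (Tstate τ₀ w n)[b-1]? = some (Sum.inr (anchor Y)) := by
            rw [hjeq]; exact hidx.2
          rw [hgn] at hthis
          have hanchYa : anchor Y = a := (Sum.inr.inj (Option.some.inj hthis)).symm
          have hYodd : Y % 2 = 1 ∧ Y = a := by
            unfold anchor at hanchYa
            split at hanchYa <;> omega
          have hiz_b : ind (Tstate τ₀ w n) false (w n).2 = b := by omega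
          have hiyb : b ≤ ind (Tstate τ₀ w n) true (w n).1 := by omega
          rcases Tstep_cases (Tstate τ₀ w n) (w n).1 (w n).2 with
            ⟨hp, hcmp, heq⟩ | ⟨hp, hcmp, heq⟩ | ⟨hp, hcmp, heq⟩ | ⟨hp, hcmp, heq⟩ <;>
              rw [show Tout τ₀ w n = (Tstep (Tstate τ₀ w n) (w n).1 (w n).2).1 from rfl, heq]
                at houtn <;> simp only at houtn
          · -- even-y branch: iy = b forces an inl at position b-1, contradiction
            have hiy_b2 : ind (Tstate τ₀ w n) true (w n).1 = b := by omega
            have hy0 : (w n).1 ≠ 0 := by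
              intro h0
              rw [ind_eq_zero h0] at hiy_b2; omega
            have hidx2 := idx_of_mem (mem_left htn (anchor_mem h1 hy0 (hw n).1))
            rw [ind_eq_left hy0] at hiy_b2
            have hgl : (Tstate τ₀ w n)[b-1]? = some (Sum.inl (anchor (w n).1)) := by
              rw [show b - 1 = (Tstate τ₀ w n).idxOf (Sum.inl (anchor (w n).1)) by omega]
              exact hidx2.2
            rw [hgn] at hgl
            exact absurd (Option.some.inj hgl) (by simp)
          · omega
          · rw [hπ] at hp; omega
          · omega
        · have hba := ordR htn hjlt hgn hidx.2
          have : anchor Y ≤ Y := by unfold anchor; split <;> omega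
          omega
      have heva : Even (a + 1) := by
        rw [Nat.even_iff]; omega
      exact Or.inr ⟨minRec _ hexZ, by rw [show minRec _ hexZ = a + 1 by omega]; exact heva,
        minRec_rec hexZ, minRec_eventually hexZ⟩
/-! ## Main lemma, odd case -/

lemma lemB {d₁ d₂ : ℕ} {τ₀ : TS} {w : ℕ → ℕ × ℕ}
    (h1 : Odd d₁) (h2 : Odd d₂) (hτ : IsTState d₁ d₂ τ₀)
    (hw : ∀ n, (w n).1 ≤ d₁ ∧ 1 ≤ (w n).2 ∧ (w n).2 ≤ d₂) {b : ℕ} (hb : 1 ≤ b)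
    (hfreq : ∃ᶠ n in atTop, Tout τ₀ w n = 2 * b - 1)
    (hev : ∀ᶠ n in atTop, 2 * b - 1 ≤ Tout τ₀ w n)
    (hexY : ∃ x, ∃ᶠ n in atTop, (fun n => (w n).1) n = x)
    (hexZ : ∃ x, ∃ᶠ n in atTop, (fun n => (w n).2) n = x) :
    ¬ Even (minRec _ hexY) ∧ ¬ Even (minRec _ hexZ) := by
  obtain ⟨T, hT⟩ := eventually_atTop.1 hev
  obtain ⟨n₀, hn₀T, hn₀⟩ := frequently_atTop.1 hfreq T
  have htn₀ := run_invariant h1 h2 hτ hw n₀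
  have hblen : ∀ n, b ≤ (Tstate τ₀ w n).length := by
    intro n
    rw [run_length h1 h2 hτ hw n, ← run_length h1 h2 hτ hw n₀]
    rcases helper_odd h1 h2 htn₀ (hw n₀).1 (hw n₀).2.1 (hw n₀).2.2 hb hn₀ with
      ⟨_, hg, _, _⟩ | ⟨_, hg, _, _⟩ <;> have := getElem?_lt_length hg <;> omega
  have hstab := run_take_stable_from (τ₀ := τ₀) (w := w) (b := b - 1) (fun n => by have := hblen n; omega)
    (fun n hn => by have := hT n hn; omega)
  -- behaviour of the element at position b-1 at event times
  have hstep_ev : ∀ n, T ≤ n → Tout τ₀ w n = 2 * b - 1 →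
      ((w n).1 % 2 = 1 ∧ (Tstate τ₀ w n)[b-1]? = some (Sum.inl (w n).1) ∧
        ∃ e', (Tstate τ₀ w (n+1))[b-1]? = some (Sum.inr e')) ∨
      ((w n).2 % 2 = 1 ∧ (Tstate τ₀ w n)[b-1]? = some (Sum.inr (w n).2) ∧
        ∃ e', (Tstate τ₀ w (n+1))[b-1]? = some (Sum.inl e')) := by
    intro n hn hevn
    have htn := run_invariant h1 h2 hτ hw n
    have hstate : Tstate τ₀ w (n+1) = (Tstep (Tstate τ₀ w n) (w n).1 (w n).2).2 := rfl
    rcases helper_odd h1 h2 htn (hw n).1 (hw n).2.1 (hw n).2.2 hb hevn with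
      ⟨hp, hg, hzge, hst⟩ | ⟨hp, hg, hyge, hst⟩
    · left
      refine ⟨hp, hg, ?_⟩
      have hz0 : (w n).2 ≠ 0 := by have := (hw n).2.1; omega
      have hex : ∃ x ∈ (Tstate τ₀ w n).drop b, (Sum.isLeft x == false) = true := by
        by_contra hnc
        push_neg at hnc
        have hnone : ∀ x ∈ (Tstate τ₀ w n).drop ((b-1)+1), (Sum.isLeft x == false) = false := by
          intro x hx
          have hx' : x ∈ (Tstate τ₀ w n).drop b := by
            rwa [show b - 1 + 1 = b by omega] at hx
          have := hnc x hx'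
          cases hxx : (Sum.isLeft x == false)
          · rfl
          · exact absurd hxx this
        have hidxz := idx_of_mem (mem_right htn (anchor_mem h2 hz0 (hw n).2.2))
        have hlt := idx_lt_of_no_after hg (by simp) hnone
          (List.mem_iff_getElem?.2 ⟨_, hidxz.2⟩) (by simp)
        rw [ind_eq_right hz0] at hzge
        omega
      obtain ⟨e, he, hge'⟩ := (reconfig_preserve (side := false) htn hg (by simp)).2
        (by rw [show b - 1 + 1 = b by omega]; exact hex)
      rcases e with e' | e'
      · simp at he
      · refine ⟨e', ?_⟩
        rw [hstate, hst, show b = b - 1 + 1 by omega]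
        exact hge'
    · right
      refine ⟨hp, hg, ?_⟩
      have hy0 : (w n).1 ≠ 0 := by
        intro h0
        rw [ind_eq_zero h0] at hyge
        omega
      have hex : ∃ x ∈ (Tstate τ₀ w n).drop b, (Sum.isLeft x == true) = true := by
        by_contra hnc
        push_neg at hnc
        have hnone : ∀ x ∈ (Tstate τ₀ w n).drop ((b-1)+1), (Sum.isLeft x == true) = false := by
          intro x hx
          have hx' : x ∈ (Tstate τ₀ w n).drop b := by
            rwa [show b - 1 + 1 = b by omega] at hx
          have := hnc x hx'
          cases hxx : (Sum.isLeft x == true)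
          · rfl
          · exact absurd hxx this
        have hidxy := idx_of_mem (mem_left htn (anchor_mem h1 hy0 (hw n).1))
        have hlt := idx_lt_of_no_after hg (by simp) hnone
          (List.mem_iff_getElem?.2 ⟨_, hidxy.2⟩) (by simp)
        rw [ind_eq_left hy0] at hyge
        omega
      obtain ⟨e, he, hge'⟩ := (reconfig_preserve (side := true) htn hg (by simp)).2
        (by rw [show b - 1 + 1 = b by omega]; exact hex)
      rcases e with e' | e'
      · refine ⟨e', ?_⟩
        rw [hstate, hst, show b = b - 1 + 1 by omega]
        exact hge'
      · simp at he
  -- stability of position b-1 at non-event times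
  have hstep_ne : ∀ n, T ≤ n → Tout τ₀ w n ≠ 2 * b - 1 →
      (Tstate τ₀ w (n+1))[b-1]? = (Tstate τ₀ w n)[b-1]? := by
    intro n hn hne
    have h2b : 2 * b ≤ Tout τ₀ w n := by have := hT n hn; omega
    exact getElem?_eq_of_take_eq (run_take_stable (hblen n) h2b) (by omega)
  have hconst : ∀ n, T ≤ n → ∀ k, n ≤ k →
      (∀ j, n ≤ j → j < k → Tout τ₀ w j ≠ 2 * b - 1) →
      (Tstate τ₀ w k)[b-1]? = (Tstate τ₀ w n)[b-1]? := by
    intro n hn k hk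
    induction k, hk using Nat.le_induction with
    | base => intro _; rfl
    | succ k hk ih =>
      intro hfree
      rw [hstep_ne k (le_trans hn hk) (hfree k hk (by omega))]
      exact ih (fun j hj hjk => hfree j hj (by omega))
  -- infinitely many left events and right events
  have hfreqL : ∀ M, ∃ n, M ≤ n ∧ T ≤ n ∧ (w n).1 % 2 = 1 ∧
      (Tstate τ₀ w n)[b-1]? = some (Sum.inl (w n).1) := by
    intro M
    obtain ⟨n₁, hn₁, hev₁⟩ := frequently_atTop.1 hfreq (max M T)
    rcases hstep_ev n₁ (le_trans (le_max_right M T) hn₁) hev₁ with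
      ⟨hp, hg, _⟩ | ⟨hp, hg, e', hge'⟩
    · exact ⟨n₁, le_trans (le_max_left M T) hn₁, le_trans (le_max_right M T) hn₁, hp, hg⟩
    · have hP : ∃ k, n₁ + 1 ≤ k ∧ Tout τ₀ w k = 2 * b - 1 := by
        obtain ⟨k, hk, h⟩ := frequently_atTop.1 hfreq (n₁+1)
        exact ⟨k, hk, h⟩
      have hn₂ := Nat.find_spec hP
      set n₂ := Nat.find hP with hn₂def
      have hmin : ∀ j, n₁ + 1 ≤ j → j < n₂ → Tout τ₀ w j ≠ 2 * b - 1 :=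
        fun j hj1 hj2 hje => Nat.find_min hP hj2 ⟨hj1, hje⟩
      have hT2 : T ≤ n₂ := by
        have := le_trans (le_max_right M T) hn₁; omega
      have hcn : (Tstate τ₀ w n₂)[b-1]? = (Tstate τ₀ w (n₁+1))[b-1]? :=
        hconst (n₁+1) (by have := le_trans (le_max_right M T) hn₁; omega) n₂ hn₂.1 hmin
      rcases hstep_ev n₂ hT2 hn₂.2 with ⟨hp2, hg2, _⟩ | ⟨hp2, hg2, _⟩
      · exact ⟨n₂, by have := le_trans (le_max_left M T) hn₁; omega, hT2, hp2, hg2⟩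
      · exfalso
        rw [hcn, hge'] at hg2
        exact absurd (Option.some.inj hg2) (by simp)
  have hfreqR : ∀ M, ∃ n, M ≤ n ∧ T ≤ n ∧ (w n).2 % 2 = 1 ∧
      (Tstate τ₀ w n)[b-1]? = some (Sum.inr (w n).2) := by
    intro M
    obtain ⟨n₁, hn₁, hev₁⟩ := frequently_atTop.1 hfreq (max M T)
    rcases hstep_ev n₁ (le_trans (le_max_right M T) hn₁) hev₁ with
      ⟨hp, hg, e', hge'⟩ | ⟨hp, hg, _⟩
    · have hP : ∃ k, n₁ + 1 ≤ k ∧ Tout τ₀ w k = 2 * b - 1 := by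
        obtain ⟨k, hk, h⟩ := frequently_atTop.1 hfreq (n₁+1)
        exact ⟨k, hk, h⟩
      have hn₂ := Nat.find_spec hP
      set n₂ := Nat.find hP with hn₂def
      have hmin : ∀ j, n₁ + 1 ≤ j → j < n₂ → Tout τ₀ w j ≠ 2 * b - 1 :=
        fun j hj1 hj2 hje => Nat.find_min hP hj2 ⟨hj1, hje⟩
      have hT2 : T ≤ n₂ := by
        have := le_trans (le_max_right M T) hn₁; omega
      have hcn : (Tstate τ₀ w n₂)[b-1]? = (Tstate τ₀ w (n₁+1))[b-1]? :=
        hconst (n₁+1) (by have := le_trans (le_max_right M T) hn₁; omega) n₂ hn₂.1 hmin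
      rcases hstep_ev n₂ hT2 hn₂.2 with ⟨hp2, hg2, _⟩ | ⟨hp2, hg2, _⟩
      · exfalso
        rw [hcn, hge'] at hg2
        exact absurd (Option.some.inj hg2) (by simp)
      · exact ⟨n₂, by have := le_trans (le_max_left M T) hn₁; omega, hT2, hp2, hg2⟩
    · exact ⟨n₁, le_trans (le_max_left M T) hn₁, le_trans (le_max_right M T) hn₁, hp, hg⟩
  constructor
  · -- minRec of π₁ is odd
    intro hYev
    rw [Nat.even_iff] at hYev
    obtain ⟨T₂, hT₂⟩ := eventually_atTop.1 (minRec_eventually hexY)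
    obtain ⟨nr, hnrT, hπr⟩ := frequently_atTop.1 (minRec_rec hexY) T
    have hπr' : (w nr).1 = minRec _ hexY := hπr
    have hYd : minRec _ hexY ≤ d₁ := by rw [← hπr']; exact (hw nr).1
    rcases Nat.eq_zero_or_pos (minRec _ hexY) with hY0 | hYpos
    · have hle := (run_out_le (τ₀ := τ₀) (w := w) nr).1
      rw [hπr', hY0, ind_eq_zero rfl] at hle
      have := hT nr hnrT
      omega
    · set Y := minRec _ hexY with hYdef
      set a := Y - 1 with hadef
      have haodd : a % 2 = 1 := by omega
      have hamem : a ∈ oddList d₁ := (mem_oddList h1).2 ⟨haodd, by omega⟩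
      obtain ⟨n, hnM, hnT, hp, hg⟩ := hfreqL (max T T₂)
      have htn := run_invariant h1 h2 hτ hw n
      have hy'Y : Y ≤ (w n).1 := hT₂ n (le_trans (le_max_right T T₂) hnM)
      have hay : a < (w n).1 := by omega
      have hidx := idx_of_mem (mem_left htn hamem)
      set j := (Tstate τ₀ w n).idxOf (Sum.inl a) with hjdef
      have hjlt : j < b - 1 := by
        rcases lt_trichotomy j (b-1) with h | h | h
        · exact h
        · exfalso
          have hthis : (Tstate τ₀ w n)[b-1]? = some (Sum.inl a) := by
            rw [← h]; exact hidx.2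
          rw [hg] at hthis
          have := Sum.inl.inj (Option.some.inj hthis)
          omega
        · exfalso
          have := ordL htn h hg hidx.2
          omega
      -- position j is in the stable prefix
      have hstable_j : ∀ k, T ≤ k → (Tstate τ₀ w k)[j]? = some (Sum.inl a) := by
        intro k hk
        have e1 := getElem?_eq_of_take_eq (hstab k hk) (show j < b - 1 from hjlt)
        have e2 := getElem?_eq_of_take_eq (hstab n hnT) (show j < b - 1 from hjlt)
        rw [e1, ← e2]
        exact hidx.2
      -- recurrence of Y gives too small an output
      obtain ⟨k, hkT, hπk⟩ := frequently_atTop.1 (minRec_rec hexY) T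
      have hπk' : (w k).1 = Y := hπk
      have hanchY : anchor Y = a := by unfold anchor; split <;> omega
      have hidxk : (Tstate τ₀ w k).idxOf (Sum.inl a) ≤ j :=
        idx_le_of_getElem? (hstable_j k hkT)
      have hindk : ind (Tstate τ₀ w k) true (w k).1 ≤ b - 1 := by
        rw [hπk', ind_eq_left (by omega), hanchY]
        omega
      have hle := (run_out_le (τ₀ := τ₀) (w := w) k).1
      have := hT k hkT
      omega
  · -- minRec of π₂ is odd
    intro hYev
    rw [Nat.even_iff] at hYev
    obtain ⟨T₂, hT₂⟩ := eventually_atTop.1 (minRec_eventually hexZ)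
    obtain ⟨nr, hnrT, hπr⟩ := frequently_atTop.1 (minRec_rec hexZ) T
    have hπr' : (w nr).2 = minRec _ hexZ := hπr
    have hYd : minRec _ hexZ ≤ d₂ := by rw [← hπr']; exact (hw nr).2.2
    rcases Nat.eq_zero_or_pos (minRec _ hexZ) with hY0 | hYpos
    · have hle := (run_out_le (τ₀ := τ₀) (w := w) nr).2
      rw [hπr', hY0, ind_eq_zero rfl] at hle
      have := hT nr hnrT
      omega
    · set Y := minRec _ hexZ with hYdef
      set a := Y - 1 with hadef
      have haodd : a % 2 = 1 := by omega
      have hamem : a ∈ oddList d₂ := (mem_oddList h2).2 ⟨haodd, by omega⟩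
      obtain ⟨n, hnM, hnT, hp, hg⟩ := hfreqR (max T T₂)
      have htn := run_invariant h1 h2 hτ hw n
      have hy'Y : Y ≤ (w n).2 := hT₂ n (le_trans (le_max_right T T₂) hnM)
      have hay : a < (w n).2 := by omega
      have hidx := idx_of_mem (mem_right htn hamem)
      set j := (Tstate τ₀ w n).idxOf (Sum.inr a) with hjdef
      have hjlt : j < b - 1 := by
        rcases lt_trichotomy j (b-1) with h | h | h
        · exact h
        · exfalso
          have hthis : (Tstate τ₀ w n)[b-1]? = some (Sum.inr a) := by
            rw [← h]; exact hidx.2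
          rw [hg] at hthis
          have := Sum.inr.inj (Option.some.inj hthis)
          omega
        · exfalso
          have := ordR htn h hg hidx.2
          omega
      have hstable_j : ∀ k, T ≤ k → (Tstate τ₀ w k)[j]? = some (Sum.inr a) := by
        intro k hk
        have e1 := getElem?_eq_of_take_eq (hstab k hk) (show j < b - 1 from hjlt)
        have e2 := getElem?_eq_of_take_eq (hstab n hnT) (show j < b - 1 from hjlt)
        rw [e1, ← e2]
        exact hidx.2
      obtain ⟨k, hkT, hπk⟩ := frequently_atTop.1 (minRec_rec hexZ) T
      have hπk' : (w k).2 = Y := hπk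
      have hanchY : anchor Y = a := by unfold anchor; split <;> omega
      have hidxk : (Tstate τ₀ w k).idxOf (Sum.inr a) ≤ j :=
        idx_le_of_getElem? (hstable_j k hkT)
      have hindk : ind (Tstate τ₀ w k) false (w k).2 ≤ b - 1 := by
        rw [hπk', ind_eq_right (by omega), hanchY]
        omega
      have hle := (run_out_le (τ₀ := τ₀) (w := w) k).2
      have := hT k hkT
      omega

end AuxiliaryLemmas

open List in
/-- The automaton `𝒯` recognises the union of the two parity languages: for any
valid initial state, the run of `𝒯` on `w` is accepting (min-parity on outputs)
iff `π₁(w) ∈ Parity_{d₁}` or `π₂(w) ∈ Parity_{d₂}`. -/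
theorem stmt11 (d₁ d₂ : ℕ) (h1 : Odd d₁) (h2 : Odd d₂)
    (τ₀ : TS) (hτ : IsTState d₁ d₂ τ₀)
    (w : ℕ → ℕ × ℕ)
    (hw : ∀ n, (w n).1 ≤ d₁ ∧ 1 ≤ (w n).2 ∧ (w n).2 ≤ d₂) :
    ParAccept (Tout τ₀ w) ↔
      (ParAccept (fun n => (w n).1) ∨ ParAccept (fun n => (w n).2)) := by
  have hexO : ∃ x, ∃ᶠ n in atTop, Tout τ₀ w n = x :=
    exists_rec (run_out_bound h1 h2 hτ hw)
  have hexY : ∃ x, ∃ᶠ n in atTop, (fun n => (w n).1) n = x :=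
    exists_rec (B := d₁) (fun n => (hw n).1)
  have hexZ : ∃ x, ∃ᶠ n in atTop, (fun n => (w n).2) n = x :=
    exists_rec (B := d₂) (fun n => (hw n).2.2)
  rw [parAccept_iff hexO]
  constructor
  · intro hevenO
    have hm2 : minRec _ hexO % 2 = 0 := Nat.even_iff.1 hevenO
    refine lemA h1 h2 hτ hw (b := minRec _ hexO / 2) ?_ ?_
    · have := minRec_rec hexO
      rw [show 2 * (minRec _ hexO / 2) = minRec _ hexO by omega]
      exact this
    · have := minRec_eventually hexO
      rw [show 2 * (minRec _ hexO / 2) = minRec _ hexO by omega]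
      exact this
  · intro hpar
    by_contra hodd
    have hm : minRec _ hexO % 2 = 1 := by
      rcases Nat.even_or_odd (minRec _ hexO) with h | h
      · exact absurd h hodd
      · exact Nat.odd_iff.1 h
    have hB := lemB h1 h2 hτ hw (b := (minRec _ hexO + 1)/2) (by omega) ?_ ?_ hexY hexZ
    · rcases hpar with h | h
      · exact hB.1 ((parAccept_iff hexY).1 h)
      · exact hB.2 ((parAccept_iff hexZ).1 h)
    · have := minRec_rec hexO
      rw [show 2 * ((minRec _ hexO + 1)/2) - 1 = minRec _ hexO by omega]
      exact this
    · have := minRec_eventually hexO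
      rw [show 2 * ((minRec _ hexO + 1)/2) - 1 = minRec _ hexO by omega]
      exact this
end

section
/- In a k-wise ε-complete parity automaton, for any two states q, q' in the same part with breakpoint priority x⁽⁰⁾ (the least even x such that not both q →^{ε:x+1} q' and q' →^{ε:x+1} q hold), if q →^{ε:x⁽⁰⁾} q', then the automaton cannot also contain a transition q' →^{ε:x} q for any even x, on pain of admitting an accepting run labelled by a word in Σ*ε^ω (which is forbidden). Consequently, for every even x ≥ x⁽⁰⁾ one obtains q →^{ε:x} q' (by downgrading the priority), and for every odd y < x⁽⁰⁾ both q →^{ε:y} q' and q' →^{ε:y} q hold. -/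
open Filter

/-- `ρ` is a run of `A` from the state `q` with labels `c` and priorities `p`. -/
def IsRunFrom {Sig Q : Type} (A : Aut Sig Q) (q : Q) (c : ℕ → Option Sig)
    (p : ℕ → ℕ) (ρ : ℕ → Q) : Prop :=
  ρ 0 = q ∧ ∀ i, A.trans (ρ i) (c i) (p i) (ρ (i + 1))

/-- In a `k`-wise `ε`-complete parity automaton with no accepting run labelled in
`Σ*ε^ω`, consider states `q, q'` in the same part, reachable from the initial
state, with breakpoint priority `x₀` (the least even `x` such that not both
`q →^{ε:x+1} q'` and `q' →^{ε:x+1} q` hold) and such that `q →^{ε:x₀} q'`.  Then: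
no `q' →^{ε:x} q` for even `x`; `q →^{ε:x} q'` for all even `x₀ ≤ x < d`; and
both `q →^{ε:y} q'` and `q' →^{ε:y} q` for all odd `y < x₀`. -/
theorem stmt14 {Sig Q : Type} (k d : ℕ) (A : Aut Sig Q) (part : Q → Fin k)
    -- index d: all priorities are < d, and d is even
    (hdd : Even d) (hd : ∀ q a y q', A.trans q a y q' → y < d)
    -- k-wise ε-completeness
    (hcomp : ∀ x, Even x → x < d → ∀ q q', part q = part q' →
      (A.trans q none x q' ∨ A.trans q' none (x + 1) q))
    -- no accepting run whose label is eventually only ε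
    (hNoBad : ¬ ∃ (c : ℕ → Option Sig) (p : ℕ → ℕ) (ρ : ℕ → Q),
      IsRunFrom A A.init c p ρ ∧ ParAccept p ∧ (∀ᶠ i in atTop, c i = none))
    (q q' : Q) (hpart : part q = part q')
    -- q is reachable from the initial state
    (hreach : ∃ (m : ℕ) (σ : ℕ → Q), σ 0 = A.init ∧ σ m = q ∧
      ∀ i < m, ∃ a y, A.trans (σ i) a y (σ (i + 1)))
    -- x₀ is the breakpoint priority of {q, q'}
    (x₀ : ℕ) (hx₀e : Even x₀) (hx₀d : x₀ < d)
    (hbp : ¬ (A.trans q none (x₀ + 1) q' ∧ A.trans q' none (x₀ + 1) q))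
    (hmin : ∀ x, Even x → x < x₀ →
      (A.trans q none (x + 1) q' ∧ A.trans q' none (x + 1) q))
    -- and q →^{ε:x₀} q'
    (hq : A.trans q none x₀ q') :
    (∀ x, Even x → ¬ A.trans q' none x q) ∧
    (∀ x, Even x → x₀ ≤ x → x < d → A.trans q none x q') ∧
    (∀ y, Odd y → y < x₀ → A.trans q none y q' ∧ A.trans q' none y q) := by
  have key : ∀ a b, A.trans q none a q' → A.trans q' none b q → Even (min a b) → False := by
    intro a b t1 t2 hmn
    obtain ⟨m, σ, hσ0, hσm, hσstep⟩ := hreach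
    choose ca ya hca using hσstep
    apply hNoBad
    refine ⟨fun i => if h : i < m then ca i h else none,
            fun i => if h : i < m then ya i h else if (i - m) % 2 = 0 then a else b,
            fun i => if h : i < m then σ i else if (i - m) % 2 = 0 then q else q',
            ⟨?_, ?_⟩, ⟨min a b, hmn, ?_, ?_⟩, ?_⟩
    · by_cases h : 0 < m
      · simp [h, hσ0]
      · have hm : m = 0 := by omega
        subst hm
        rw [← hσm] at *
        simpa using hσ0
    · intro i
      by_cases h : i < m
      · by_cases h' : i + 1 < m
        · simpa [h, h'] using hca i h
        · have hm2 : i + 1 = m := by omega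
          have hc := hca i h
          rw [hm2, hσm] at hc
          simpa [h, h', hm2] using hc
      · by_cases h2 : (i - m) % 2 = 0
        · have h3 : (i + 1 - m) % 2 = 1 := by omega
          have h4 : ¬ i + 1 < m := by omega
          simpa [h, h2, h3, h4] using t1
        · have h3 : (i + 1 - m) % 2 = 0 := by omega
          have h4 : ¬ i + 1 < m := by omega
          simpa [h, h2, h3, h4] using t2
    · rw [Filter.frequently_atTop]
      intro N
      rcases min_choice a b with hab | hab
      · refine ⟨m + 2 * N, by omega, ?_⟩
        have h : ¬ m + 2 * N < m := by omega
        simp [h, Nat.add_sub_cancel_left, Nat.mul_mod_right, hab]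
      · refine ⟨m + 2 * N + 1, by omega, ?_⟩
        have h : ¬ m + 2 * N + 1 < m := by omega
        have h2 : (m + 2 * N + 1 - m) % 2 = 1 := by omega
        simp [h, h2, hab]
    · rw [Filter.eventually_atTop]
      refine ⟨m, fun i hi => ?_⟩
      have h : ¬ i < m := by omega
      by_cases h2 : (i - m) % 2 = 0 <;> simp [h, h2, min_le_left, min_le_right]
    · rw [Filter.eventually_atTop]
      exact ⟨m, fun i hi => by simp [show ¬ i < m by omega]⟩
  refine ⟨?_, ?_, ?_⟩
  · intro x hx ht
    exact (key x₀ x hq ht (by rcases min_choice x₀ x with h | h <;> rw [h] <;> assumption)).elim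
  · intro x hx hle hlt
    rcases hcomp x hx hlt q q' hpart with h | h
    · exact h
    · exact (key x₀ (x + 1) hq h (by rw [min_eq_left (by omega)]; exact hx₀e)).elim
  · intro y hy hlt
    obtain ⟨z, rfl⟩ := hy
    exact hmin (2 * z) (even_two_mul z) (by omega)
end

section
/- Let Σ_n = {1,...,n} and W_n = { w ∈ Σ_n^ω : at least two distinct letters occur infinitely often in w }. Then in every game graph where all vertices are controlled by Eve (i.e., a one-player game) with objective W_n, if Eve can win from every vertex, she has a winning strategy with 2 memory states. Concretely: define χ₁(v) as the least colour reachable by a finite path from v and χ₂(v) as the second least, with shortest witnessing paths π¹_v, π²_v; the strategy that follows π¹ in memory state 1 (switching to state 2 upon outputting χ₁(v)) and π² in memory state 2 (switching back upon outputting χ₂(v)) ensures that, letting a = lim sup χ₁(v_i) along the play, both a and some colour > a are produced infinitely often, so the play is in W_n. -/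
open Filter

/-- The objective `W_n` over `Σ_n`: at least two distinct letters occur
infinitely often. -/
def TwoInf {n : ℕ} (c : ℕ → Fin n) : Prop :=
  ∃ a b : Fin n, a ≠ b ∧ (∃ᶠ i in atTop, c i = a) ∧ (∃ᶠ i in atTop, c i = b)

namespace Stmt15Aux

attribute [local instance] Classical.propDecidable

variable {n : ℕ} {V : Type} (E : V → Fin n → V → Prop)

/-- One step of the underlying (colour-forgetting) graph. -/
def Step (x y : V) : Prop := ∃ c, E x c y

/-- Reachability in the underlying graph. -/
abbrev Reach : V → V → Prop := Relation.ReflTransGen (Step E)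

/-- A colour is reachable from `v`. -/
def RC (v : V) (c : Fin n) : Prop := ∃ w w', Reach E v w ∧ E w c w'

lemma rc_of_reach {v w : V} (h : Reach E v w) {c : Fin n} (hc : RC E w c) : RC E v c := by
  obtain ⟨x, x', hx, he⟩ := hc
  exact ⟨x, x', h.trans hx, he⟩

/-- From a finite path (as a function), reachability. -/
lemma reach_of_path (f : ℕ → V) (a : ℕ) :
    ∀ b, a ≤ b → (∀ i, a ≤ i → i < b → Step E (f i) (f (i + 1))) → Reach E (f a) (f b) := by
  intro b
  induction b with
  | zero =>
    intro hab _
    have : a = 0 := Nat.le_zero.mp hab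
    subst this
    exact Relation.ReflTransGen.refl
  | succ b ih =>
    intro hab hs
    rcases Nat.lt_or_ge a (b + 1) with h | h
    · have hab' : a ≤ b := Nat.lt_succ_iff.mp h
      exact (ih hab' fun i h1 h2 => hs i h1 (by omega)).tail (hs b hab' (by omega))
    · have : a = b + 1 := le_antisymm hab h
      subst this
      exact Relation.ReflTransGen.refl

lemma path_of_reach {v w : V} (h : Reach E v w) :
    ∃ k : ℕ, ∃ f : ℕ → V, f 0 = v ∧ f k = w ∧ ∀ i < k, Step E (f i) (f (i + 1)) := by
  induction h with
  | refl => exact ⟨0, fun _ => v, rfl, rfl, fun i hi => absurd hi (by omega)⟩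
  | @tail b c hab hbc ih =>
    obtain ⟨k, f, h0, hk, hs⟩ := ih
    refine ⟨k + 1, fun i => if i ≤ k then f i else c, by simp [h0], by simp, ?_⟩
    intro i hi
    rcases Nat.lt_or_ge i k with h | h
    · have h1 : i ≤ k := by omega
      have h2 : i + 1 ≤ k := by omega
      simpa [h1, h2] using hs i h
    · have : i = k := by omega
      subst this
      have h1 : i ≤ i := le_refl _
      have h2 : ¬ (i + 1 ≤ i) := by omega
      simpa [h1, h2, hk] using hbc

lemma fin2_cases (m : Fin 2) : m = 0 ∨ m = 1 := by
  revert m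
  decide

variable (H : ∀ v : V, ∃ c c' : Fin n, c < c' ∧ RC E v c ∧ RC E v c')

include H

lemma chi1_ex (v : V) : ∃ c, RC E v c ∧ ∀ c', RC E v c' → c ≤ c' := by
  obtain ⟨c, c', _, hc, _⟩ := H v
  obtain ⟨m, hm, hmin⟩ := Set.exists_min_image {c | RC E v c} id (Set.toFinite _) ⟨c, hc⟩
  exact ⟨m, hm, fun c' hc' => hmin c' hc'⟩

/-- The least colour reachable from `v`. -/
noncomputable def chi1 (v : V) : Fin n := (chi1_ex E H v).choose

lemma chi1_rc (v : V) : RC E v (chi1 E H v) := (chi1_ex E H v).choose_spec.1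

lemma chi1_min {v : V} {c : Fin n} (h : RC E v c) : chi1 E H v ≤ c :=
  (chi1_ex E H v).choose_spec.2 c h

lemma chi1_mono {v w : V} (h : Reach E v w) : chi1 E H v ≤ chi1 E H w :=
  chi1_min E H (rc_of_reach E h (chi1_rc E H w))

lemma chi2_ex (v : V) :
    ∃ c, (RC E v c ∧ chi1 E H v < c) ∧ ∀ c', RC E v c' → chi1 E H v < c' → c ≤ c' := by
  obtain ⟨c, c', hlt, hc, hc'⟩ := H v
  have hne : ({x | RC E v x ∧ chi1 E H v < x}).Nonempty :=
    ⟨c', hc', lt_of_le_of_lt (chi1_min E H hc) hlt⟩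
  obtain ⟨m, hm, hmin⟩ := Set.exists_min_image _ id (Set.toFinite _) hne
  exact ⟨m, hm, fun c' h1 h2 => hmin c' ⟨h1, h2⟩⟩

/-- The second least colour reachable from `v`. -/
noncomputable def chi2 (v : V) : Fin n := (chi2_ex E H v).choose

lemma chi2_rc (v : V) : RC E v (chi2 E H v) := (chi2_ex E H v).choose_spec.1.1

lemma chi2_gt (v : V) : chi1 E H v < chi2 E H v := (chi2_ex E H v).choose_spec.1.2

lemma chi2_min {v : V} {c : Fin n} (h : RC E v c) (h2 : chi1 E H v < c) : chi2 E H v ≤ c :=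
  (chi2_ex E H v).choose_spec.2 c h h2


/-- There is a path of length `k` from `v` ending at an edge coloured `chi1 v`. -/
def P1 (v : V) (k : ℕ) : Prop :=
  ∃ f : ℕ → V, f 0 = v ∧ (∀ i < k, Step E (f i) (f (i + 1))) ∧
    ∃ w', E (f k) (chi1 E H v) w'

lemma P1_ex (v : V) : ∃ k, P1 E H v k := by
  obtain ⟨w, w', hr, he⟩ := chi1_rc E H v
  obtain ⟨k, f, h0, hk, hs⟩ := path_of_reach E hr
  exact ⟨k, f, h0, hs, w', by rwa [hk]⟩

noncomputable def N1 (v : V) : ℕ := Nat.find (P1_ex E H v)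

lemma N1_spec (v : V) : P1 E H v (N1 E H v) := Nat.find_spec (P1_ex E H v)

lemma N1_min {v : V} {k : ℕ} (h : P1 E H v k) : N1 E H v ≤ k := Nat.find_le h

noncomputable def wit1 (v : V) : ℕ → V := (N1_spec E H v).choose

lemma wit1_spec (v : V) :
    wit1 E H v 0 = v ∧ (∀ i < N1 E H v, Step E (wit1 E H v i) (wit1 E H v (i + 1))) ∧
      ∃ w', E (wit1 E H v (N1 E H v)) (chi1 E H v) w' :=
  (N1_spec E H v).choose_spec

noncomputable def tgt1 (v : V) : V := (wit1_spec E H v).2.2.choose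

lemma tgt1_spec (v : V) : E (wit1 E H v (N1 E H v)) (chi1 E H v) (tgt1 E H v) :=
  (wit1_spec E H v).2.2.choose_spec

/-- Same for the second colour. -/
def P2 (v : V) (k : ℕ) : Prop :=
  ∃ f : ℕ → V, f 0 = v ∧ (∀ i < k, Step E (f i) (f (i + 1))) ∧
    ∃ w', E (f k) (chi2 E H v) w'

lemma P2_ex (v : V) : ∃ k, P2 E H v k := by
  obtain ⟨w, w', hr, he⟩ := chi2_rc E H v
  obtain ⟨k, f, h0, hk, hs⟩ := path_of_reach E hr
  exact ⟨k, f, h0, hs, w', by rwa [hk]⟩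

noncomputable def N2 (v : V) : ℕ := Nat.find (P2_ex E H v)

lemma N2_spec (v : V) : P2 E H v (N2 E H v) := Nat.find_spec (P2_ex E H v)

lemma N2_min {v : V} {k : ℕ} (h : P2 E H v k) : N2 E H v ≤ k := Nat.find_le h

noncomputable def wit2 (v : V) : ℕ → V := (N2_spec E H v).choose

lemma wit2_spec (v : V) :
    wit2 E H v 0 = v ∧ (∀ i < N2 E H v, Step E (wit2 E H v i) (wit2 E H v (i + 1))) ∧
      ∃ w', E (wit2 E H v (N2 E H v)) (chi2 E H v) w' :=
  (N2_spec E H v).choose_spec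

noncomputable def tgt2 (v : V) : V := (wit2_spec E H v).2.2.choose

lemma tgt2_spec (v : V) : E (wit2 E H v (N2 E H v)) (chi2 E H v) (tgt2 E H v) :=
  (wit2_spec E H v).2.2.choose_spec

lemma step0_1 {v : V} (h : ¬ N1 E H v = 0) : Step E v (wit1 E H v 1) := by
  have := (wit1_spec E H v).2.1 0 (Nat.pos_of_ne_zero h)
  rwa [(wit1_spec E H v).1] at this

lemma step0_2 {v : V} (h : ¬ N2 E H v = 0) : Step E v (wit2 E H v 1) := by
  have := (wit2_spec E H v).2.1 0 (Nat.pos_of_ne_zero h)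
  rwa [(wit2_spec E H v).1] at this

/-- The move in memory state `0`: colour, next vertex, next memory. -/
noncomputable def move1 (v : V) : Fin n × V × Fin 2 :=
  if h : N1 E H v = 0 then (chi1 E H v, tgt1 E H v, 1)
  else ((step0_1 E H h).choose, wit1 E H v 1, 0)

noncomputable def move2 (v : V) : Fin n × V × Fin 2 :=
  if h : N2 E H v = 0 then (chi2 E H v, tgt2 E H v, 0)
  else ((step0_2 E H h).choose, wit2 E H v 1, 1)

lemma move1_edge (v : V) : E v (move1 E H v).1 (move1 E H v).2.1 := by
  unfold move1
  split_ifs with h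
  · have := tgt1_spec E H v
    rw [h, (wit1_spec E H v).1] at this
    exact this
  · exact (step0_1 E H h).choose_spec

lemma move2_edge (v : V) : E v (move2 E H v).1 (move2 E H v).2.1 := by
  unfold move2
  split_ifs with h
  · have := tgt2_spec E H v
    rw [h, (wit2_spec E H v).1] at this
    exact this
  · exact (step0_2 E H h).choose_spec

lemma move1_zero {v : V} (h : N1 E H v = 0) :
    (move1 E H v).1 = chi1 E H v ∧ (move1 E H v).2.2 = 1 := by
  unfold move1
  rw [dif_pos h]
  exact ⟨rfl, rfl⟩

lemma move2_zero {v : V} (h : N2 E H v = 0) :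
    (move2 E H v).1 = chi2 E H v ∧ (move2 E H v).2.2 = 0 := by
  unfold move2
  rw [dif_pos h]
  exact ⟨rfl, rfl⟩

lemma move1_pos {v : V} (h : ¬ N1 E H v = 0) :
    (move1 E H v).2.2 = 0 ∧ chi1 E H ((move1 E H v).2.1) = chi1 E H v ∧
      N1 E H ((move1 E H v).2.1) < N1 E H v := by
  have hw := wit1_spec E H v
  have htgt := move1_edge E H v
  have hmv : (move1 E H v).2.1 = wit1 E H v 1 ∧ (move1 E H v).2.2 = 0 := by
    unfold move1
    rw [dif_neg h]
    exact ⟨rfl, rfl⟩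
  set w := wit1 E H v 1 with hwdef
  -- reach from w to the end of the witness path
  have hreach : Reach E w (wit1 E H v (N1 E H v)) := by
    have := reach_of_path E (wit1 E H v) 1 (N1 E H v) (Nat.one_le_iff_ne_zero.mpr h)
      (fun i _ h2 => hw.2.1 i h2)
    exact this
  have hrc : RC E w (chi1 E H v) := ⟨_, _, hreach, tgt1_spec E H v⟩
  -- v steps to w
  have hstep : Step E v w := step0_1 E H h
  have hle : chi1 E H w ≤ chi1 E H v := chi1_min E H hrc
  have hge : chi1 E H v ≤ chi1 E H w := chi1_mono E H (Relation.ReflTransGen.single hstep)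
  have heq : chi1 E H w = chi1 E H v := le_antisymm hle hge
  have hP : P1 E H w (N1 E H v - 1) := by
    refine ⟨fun i => wit1 E H v (i + 1), rfl, ?_, tgt1 E H v, ?_⟩
    · intro i hi
      exact hw.2.1 (i + 1) (by omega)
    · show E (wit1 E H v (N1 E H v - 1 + 1)) (chi1 E H w) (tgt1 E H v)
      have h1 : N1 E H v - 1 + 1 = N1 E H v := by omega
      rw [h1, heq]
      exact tgt1_spec E H v
  refine ⟨hmv.2, ?_, ?_⟩
  · rw [hmv.1]; exact heq
  · rw [hmv.1]
    exact lt_of_le_of_lt (N1_min E H hP) (by omega)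

lemma move2_pos {v : V} (h : ¬ N2 E H v = 0) :
    (move2 E H v).2.2 = 1 ∧
      (chi1 E H ((move2 E H v).2.1) = chi1 E H v →
        chi2 E H ((move2 E H v).2.1) = chi2 E H v ∧
          N2 E H ((move2 E H v).2.1) < N2 E H v) := by
  have hw := wit2_spec E H v
  have hmv : (move2 E H v).2.1 = wit2 E H v 1 ∧ (move2 E H v).2.2 = 1 := by
    unfold move2
    rw [dif_neg h]
    exact ⟨rfl, rfl⟩
  set w := wit2 E H v 1 with hwdef
  have hreach : Reach E w (wit2 E H v (N2 E H v)) :=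
    reach_of_path E (wit2 E H v) 1 (N2 E H v) (Nat.one_le_iff_ne_zero.mpr h)
      (fun i _ h2 => hw.2.1 i h2)
  have hrc : RC E w (chi2 E H v) := ⟨_, _, hreach, tgt2_spec E H v⟩
  have hstep : Step E v w := step0_2 E H h
  refine ⟨hmv.2, ?_⟩
  rw [hmv.1]
  intro hq
  have hle : chi2 E H w ≤ chi2 E H v := by
    refine chi2_min E H hrc ?_
    rw [hq]
    exact chi2_gt E H v
  have hge : chi2 E H v ≤ chi2 E H w := by
    refine chi2_min E H (rc_of_reach E (Relation.ReflTransGen.single hstep) (chi2_rc E H w)) ?_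
    rw [← hq]
    exact chi2_gt E H w
  have heq : chi2 E H w = chi2 E H v := le_antisymm hle hge
  have hP : P2 E H w (N2 E H v - 1) := by
    refine ⟨fun i => wit2 E H v (i + 1), rfl, ?_, tgt2 E H v, ?_⟩
    · intro i hi
      exact hw.2.1 (i + 1) (by omega)
    · show E (wit2 E H v (N2 E H v - 1 + 1)) (chi2 E H w) (tgt2 E H v)
      have h1 : N2 E H v - 1 + 1 = N2 E H v := by omega
      rw [h1, heq]
      exact tgt2_spec E H v
  exact ⟨heq, lt_of_le_of_lt (N2_min E H hP) (by omega)⟩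

end Stmt15Aux

open Stmt15Aux in
/-- One-player games with objective `W_n`: if from every vertex of the
(Σ_n-edge-coloured) graph there is an infinite path whose colours realise `W_n`
(i.e. Eve, controlling all vertices, wins from every vertex), then Eve has a
winning strategy with 2 memory states: edge choices `σc, σt` and memory updates
`σm` depending only on the current vertex and memory state, such that from every
initial vertex and memory state the induced play produces a colour sequence in
`W_n`. -/
theorem stmt15 (n : ℕ) {V : Type} (E : V → Fin n → V → Prop)
    (hwin : ∀ v : V, ∃ (ρ : ℕ → V) (c : ℕ → Fin n),
      ρ 0 = v ∧ (∀ i, E (ρ i) (c i) (ρ (i + 1))) ∧ TwoInf c) :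
    ∃ (σc : V → Fin 2 → Fin n) (σt : V → Fin 2 → V) (σm : V → Fin 2 → Fin 2),
      (∀ v m, E v (σc v m) (σt v m)) ∧
      ∀ (v₀ : V) (m₀ : Fin 2),
        TwoInf (fun i =>
          let p := (fun q : V × Fin 2 => (σt q.1 q.2, σm q.1 q.2))^[i] (v₀, m₀)
          σc p.1 p.2) := by
  classical
  have H : ∀ v : V, ∃ c c' : Fin n, c < c' ∧ RC E v c ∧ RC E v c' := by
    intro v
    obtain ⟨ρ, c, h0, hE, a, b, hab, ha, hb⟩ := hwin v
    have hreach : ∀ i, Reach E v (ρ i) := by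
      intro i
      induction i with
      | zero => rw [h0]
      | succ i ih => exact ih.tail ⟨c i, hE i⟩
    have hrc : ∀ i, RC E v (c i) := fun i => ⟨ρ i, ρ (i + 1), hreach i, hE i⟩
    obtain ⟨i, hi⟩ := ha.exists
    obtain ⟨j, hj⟩ := hb.exists
    rcases lt_or_gt_of_ne hab with h | h
    · exact ⟨a, b, h, hi ▸ hrc i, hj ▸ hrc j⟩
    · exact ⟨b, a, h, hj ▸ hrc j, hi ▸ hrc i⟩
  set σc : V → Fin 2 → Fin n :=
    fun v m => if m = 0 then (move1 E H v).1 else (move2 E H v).1 with hσc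
  set σt : V → Fin 2 → V :=
    fun v m => if m = 0 then (move1 E H v).2.1 else (move2 E H v).2.1 with hσt
  set σm : V → Fin 2 → Fin 2 :=
    fun v m => if m = 0 then (move1 E H v).2.2 else (move2 E H v).2.2 with hσm
  refine ⟨σc, σt, σm, ?_, ?_⟩
  · intro v m
    rcases fin2_cases m with h | h <;> subst h
    · simpa [hσc, hσt] using move1_edge E H v
    · simpa [hσc, hσt] using move2_edge E H v
  · intro v₀ m₀
    set p : ℕ → V × Fin 2 :=
      fun i => (fun q : V × Fin 2 => (σt q.1 q.2, σm q.1 q.2))^[i] (v₀, m₀) with hp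
    show TwoInf fun i => σc (p i).1 (p i).2
    set cs : ℕ → Fin n := fun i => σc (p i).1 (p i).2 with hcs
    have hstep : ∀ i, p (i + 1) = (σt (p i).1 (p i).2, σm (p i).1 (p i).2) := by
      intro i
      rw [hp]
      exact Function.iterate_succ_apply' _ i _
    -- unfolding for memory state 0
    have hm0 : ∀ i, (p i).2 = 0 →
        cs i = (move1 E H (p i).1).1 ∧ (p (i + 1)).1 = (move1 E H (p i).1).2.1 ∧
          (p (i + 1)).2 = (move1 E H (p i).1).2.2 := by
      intro i h
      rw [hcs, hstep i]
      simp [hσc, hσt, hσm, h]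
    have hm1 : ∀ i, (p i).2 = 1 →
        cs i = (move2 E H (p i).1).1 ∧ (p (i + 1)).1 = (move2 E H (p i).1).2.1 ∧
          (p (i + 1)).2 = (move2 E H (p i).1).2.2 := by
      intro i h
      rw [hcs, hstep i]
      simp [hσc, hσt, hσm, h]
    -- each step follows an edge of the graph
    have hedge : ∀ i, Step E (p i).1 (p (i + 1)).1 := by
      intro i
      rcases fin2_cases (p i).2 with h | h
      · obtain ⟨-, h2, -⟩ := hm0 i h
        rw [h2]
        exact ⟨_, move1_edge E H (p i).1⟩
      · obtain ⟨-, h2, -⟩ := hm1 i h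
        rw [h2]
        exact ⟨_, move2_edge E H (p i).1⟩
    -- χ₁ along the play is monotone, hence eventually constant
    have hmono : Monotone fun i => (chi1 E H (p i).1 : ℕ) := by
      apply monotone_nat_of_le_succ
      intro i
      exact_mod_cast chi1_mono E H (Relation.ReflTransGen.single (hedge i))
    obtain ⟨M, ⟨T, hT⟩, hMmax⟩ :=
      Set.exists_max_image (Set.range fun i => (chi1 E H (p i).1 : ℕ)) id
        ((Set.finite_Iio n).subset (by rintro x ⟨i, rfl⟩; exact (chi1 E H (p i).1).2))
        ⟨_, Set.mem_range_self 0⟩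
    have hconst : ∀ i, T ≤ i → chi1 E H (p i).1 = chi1 E H (p T).1 := by
      intro i hi
      have h1 : (chi1 E H (p T).1 : ℕ) ≤ (chi1 E H (p i).1 : ℕ) := hmono hi
      have h2 : (chi1 E H (p i).1 : ℕ) ≤ M := hMmax _ (Set.mem_range_self i)
      have h3 : (chi1 E H (p T).1 : ℕ) = M := hT
      have : (chi1 E H (p i).1 : ℕ) = (chi1 E H (p T).1 : ℕ) := by omega
      exact Fin.val_injective this
    set a : Fin n := chi1 E H (p T).1 with ha
    -- from memory state 0 we eventually output `a` and switch to state 1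
    have A : ∀ k i, T ≤ i → (p i).2 = 0 → N1 E H (p i).1 ≤ k →
        ∃ j, i ≤ j ∧ cs j = a ∧ (p (j + 1)).2 = 1 := by
      intro k
      induction k with
      | zero =>
        intro i hi h0 hN
        have hz : N1 E H (p i).1 = 0 := Nat.le_zero.mp hN
        obtain ⟨h1, -, h3⟩ := hm0 i h0
        obtain ⟨hz1, hz2⟩ := move1_zero E H hz
        exact ⟨i, le_refl i, by rw [h1, hz1, hconst i hi], by rw [h3, hz2]⟩
      | succ k ih =>
        intro i hi h0 hN
        by_cases hz : N1 E H (p i).1 = 0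
        · obtain ⟨h1, -, h3⟩ := hm0 i h0
          obtain ⟨hz1, hz2⟩ := move1_zero E H hz
          exact ⟨i, le_refl i, by rw [h1, hz1, hconst i hi], by rw [h3, hz2]⟩
        · obtain ⟨-, h2, h3⟩ := hm0 i h0
          obtain ⟨hmz, -, hlt⟩ := move1_pos E H hz
          have hN' : N1 E H (p (i + 1)).1 ≤ k := by
            rw [h2]; omega
          obtain ⟨j, hj1, hj2, hj3⟩ := ih (i + 1) (by omega) (by rw [h3, hmz]) hN'
          exact ⟨j, by omega, hj2, hj3⟩
    -- from memory state 1 we eventually output a colour `> a` and switch to state 0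
    have B : ∀ k i, T ≤ i → (p i).2 = 1 → N2 E H (p i).1 ≤ k →
        ∃ j, i ≤ j ∧ a < cs j ∧ (p (j + 1)).2 = 0 := by
      intro k
      induction k with
      | zero =>
        intro i hi h0 hN
        have hz : N2 E H (p i).1 = 0 := Nat.le_zero.mp hN
        obtain ⟨h1, -, h3⟩ := hm1 i h0
        obtain ⟨hz1, hz2⟩ := move2_zero E H hz
        refine ⟨i, le_refl i, ?_, by rw [h3, hz2]⟩
        rw [h1, hz1, ← hconst i hi]
        exact chi2_gt E H (p i).1
      | succ k ih =>
        intro i hi h0 hN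
        by_cases hz : N2 E H (p i).1 = 0
        · obtain ⟨h1, -, h3⟩ := hm1 i h0
          obtain ⟨hz1, hz2⟩ := move2_zero E H hz
          refine ⟨i, le_refl i, ?_, by rw [h3, hz2]⟩
          rw [h1, hz1, ← hconst i hi]
          exact chi2_gt E H (p i).1
        · obtain ⟨-, h2, h3⟩ := hm1 i h0
          obtain ⟨hmo, himp⟩ := move2_pos E H hz
          have hq : chi1 E H ((move2 E H (p i).1).2.1) = chi1 E H (p i).1 := by
            rw [← h2, hconst (i + 1) (by omega), hconst i hi]
          obtain ⟨-, hlt⟩ := himp hq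
          have hN' : N2 E H (p (i + 1)).1 ≤ k := by
            rw [h2]; omega
          obtain ⟨j, hj1, hj2, hj3⟩ := ih (i + 1) (by omega) (by rw [h3, hmo]) hN'
          exact ⟨j, by omega, hj2, hj3⟩
    -- `a` appears beyond any bound
    have freqa : ∀ N, ∃ j, N ≤ j ∧ cs j = a := by
      intro N
      set i := max N T with hi
      have hTi : T ≤ i := le_max_right _ _
      rcases fin2_cases (p i).2 with h | h
      · obtain ⟨j, hj1, hj2, -⟩ := A (N1 E H (p i).1) i hTi h (le_refl _)
        exact ⟨j, by omega, hj2⟩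
      · obtain ⟨j, hj1, -, hj3⟩ := B (N2 E H (p i).1) i hTi h (le_refl _)
        obtain ⟨j', hj'1, hj'2, -⟩ := A (N1 E H (p (j + 1)).1) (j + 1) (by omega) hj3 (le_refl _)
        exact ⟨j', by omega, hj'2⟩
    -- a colour `> a` appears beyond any bound
    have freqb : ∀ N, ∃ j, N ≤ j ∧ a < cs j := by
      intro N
      set i := max N T with hi
      have hTi : T ≤ i := le_max_right _ _
      rcases fin2_cases (p i).2 with h | h
      · obtain ⟨j, hj1, -, hj3⟩ := A (N1 E H (p i).1) i hTi h (le_refl _)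
        obtain ⟨j', hj'1, hj'2, -⟩ := B (N2 E H (p (j + 1)).1) (j + 1) (by omega) hj3 (le_refl _)
        exact ⟨j', by omega, hj'2⟩
      · obtain ⟨j, hj1, hj2, -⟩ := B (N2 E H (p i).1) i hTi h (le_refl _)
        exact ⟨j, by omega, hj2⟩
    have hfa : ∃ᶠ j in atTop, cs j = a :=
      frequently_atTop.mpr fun N => (freqa N).imp fun j hj => ⟨hj.1, hj.2⟩
    have hinf : {j | a < cs j}.Infinite :=
      Nat.frequently_atTop_iff_infinite.mp
        (frequently_atTop.mpr fun N => (freqb N).imp fun j hj => ⟨hj.1, hj.2⟩)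
    -- pigeonhole: one single colour `> a` appears infinitely often
    have hpigeon : ∃ b : Fin n, {j | cs j = b ∧ a < cs j}.Infinite := by
      by_contra hcon
      push_neg at hcon
      have hcon : ∀ b : Fin n, {j | cs j = b ∧ a < cs j}.Finite := fun b => by
        simpa only [Set.not_infinite] using hcon b
      have hsub : {j | a < cs j} ⊆ ⋃ b : Fin n, {j | cs j = b ∧ a < cs j} := by
        intro j hj
        exact Set.mem_iUnion.mpr ⟨cs j, rfl, hj⟩
      exact hinf ((Set.finite_iUnion hcon).subset hsub)
    obtain ⟨b, hb⟩ := hpigeon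
    obtain ⟨j0, hj01, hj02⟩ := hb.nonempty
    have hab : a < b := hj01 ▸ hj02
    refine ⟨a, b, ne_of_lt hab, hfa, ?_⟩
    have : {j | cs j = b}.Infinite := hb.mono fun j hj => hj.1
    exact Nat.frequently_atTop_iff_infinite.mpr this
end
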